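/- arXiv:2009.12810 — 5 statements merged into one kernel-verified Lean document; each statement's English description precedes it below -/
import Mathlib

section
/- Let μ be a positive Borel measure on ℝ that is a tempered distribution, whose distributional Fourier transform μ̂ is a measure satisfying ∫_{(-R,R)} d|μ̂| = O(R^m) as R → ∞ for some m > 0. Then there exists a constant C > 0 such that μ((a,b)) ≤ C(1 + b − a) for all real a < b. -/
open MeasureTheory Set Polynomial
open scoped FourierTransform Real

noncomputable section

namespace Stmt0Aux

/-- modulation parameter -/
def cc (a : ℝ) : ℂ := 2 * Real.pi * Complex.I * a

/-- polynomial times modulated gaussian -/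
def fQ (a : ℝ) (Q : ℂ[X]) (x : ℝ) : ℂ :=
  Q.eval (x : ℂ) * Complex.exp (-(Real.pi : ℂ) * x ^ 2 + cc a * x)

/-- derivative operator on polynomials -/
def TT (a : ℝ) (Q : ℂ[X]) : ℂ[X] :=
  derivative Q + Q * (C (cc a) - C (2 * (Real.pi : ℂ)) * X)

lemma contDiff_polyEval (Q : ℂ[X]) : ContDiff ℂ ⊤ fun z : ℂ => Q.eval z := by
  induction Q using Polynomial.induction_on' with
  | add p q hp hq => simpa [Polynomial.eval_add] using hp.add hq
  | monomial n a =>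
    simpa [Polynomial.eval_monomial] using contDiff_const.mul (contDiff_id.pow n)

lemma contDiff_fQ (a : ℝ) (Q : ℂ[X]) : ContDiff ℝ ⊤ (fQ a Q) := by
  have h : ContDiff ℂ ⊤ (fun z : ℂ =>
      Q.eval z * Complex.exp (-(Real.pi : ℂ) * z ^ 2 + cc a * z)) := by
    apply ContDiff.mul
    · exact contDiff_polyEval Q
    · exact Complex.contDiff_exp.comp (by fun_prop)
  exact (h.restrict_scalars ℝ).comp Complex.ofRealCLM.contDiff

lemma hasDerivAt_fQ (a : ℝ) (Q : ℂ[X]) (x : ℝ) :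
    HasDerivAt (fQ a Q) (fQ a (TT a Q) x) x := by
  have h1 : HasDerivAt (fun z : ℂ => Q.eval z) (Q.derivative.eval (x : ℂ)) (x : ℂ) :=
    Q.hasDerivAt _
  have h2 : HasDerivAt (fun z : ℂ => -(Real.pi : ℂ) * z ^ 2 + cc a * z)
      (-(Real.pi : ℂ) * (2 * (x:ℂ)) + cc a) (x : ℂ) := by
    have ha : HasDerivAt (fun z : ℂ => -(Real.pi : ℂ) * z ^ 2)
        (-(Real.pi : ℂ) * (2 * (x:ℂ))) (x:ℂ) := by
      simpa using ((hasDerivAt_pow 2 (x:ℂ)).const_mul (-(Real.pi:ℂ)))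
    have hb : HasDerivAt (fun z : ℂ => cc a * z) (cc a) (x:ℂ) := by
      simpa using (hasDerivAt_id (x:ℂ)).const_mul (cc a)
    exact ha.add hb
  have h3 := h2.cexp
  have h4 := (h1.mul h3).comp_ofReal
  convert h4 using 1
  · funext y; rfl
  simp only [fQ, TT, eval_add, eval_mul, eval_sub, eval_C, eval_X, Polynomial.eval_mul]
  ring

lemma iteratedDeriv_fQ (a : ℝ) (Q : ℂ[X]) (n : ℕ) :
    iteratedDeriv n (fQ a Q) = fQ a ((TT a)^[n] Q) := by
  induction n with
  | zero => simp
  | succ n ih =>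
    rw [iteratedDeriv_succ, ih, Function.iterate_succ_apply']
    funext x
    exact (hasDerivAt_fQ a _ x).deriv

lemma norm_fQ (a : ℝ) (Q : ℂ[X]) (x : ℝ) :
    ‖fQ a Q x‖ = ‖Q.eval (x : ℂ)‖ * Real.exp (-(Real.pi * x ^ 2)) := by
  have harg : -(Real.pi : ℂ) * (x:ℂ) ^ 2 + cc a * x
      = ((-(Real.pi * x ^ 2) : ℝ) : ℂ) + ((2 * Real.pi * a * x : ℝ) : ℂ) * Complex.I := by
    simp only [cc]
    push_cast
    ring
  rw [fQ, norm_mul, harg, Complex.norm_exp]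
  simp [← Complex.ofReal_pow]

lemma poly_bound (P : ℂ[X]) : ∃ C : ℝ, 0 ≤ C ∧
    ∀ x : ℝ, ‖P.eval (x : ℂ)‖ ≤ C * (1 + |x|) ^ P.natDegree := by
  refine ⟨∑ i ∈ Finset.range (P.natDegree + 1), ‖P.coeff i‖,
    Finset.sum_nonneg fun i _ => norm_nonneg _, fun x => ?_⟩
  rw [P.eval_eq_sum_range, Finset.sum_mul]
  refine (norm_sum_le _ _).trans (Finset.sum_le_sum fun i hi => ?_)
  rw [norm_mul, norm_pow]
  have hx : ‖(x : ℂ)‖ ≤ 1 + |x| := by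
    rw [Complex.norm_real, Real.norm_eq_abs]; linarith [abs_nonneg x]
  have h1 : ‖(x:ℂ)‖ ^ i ≤ (1 + |x|) ^ i :=
    pow_le_pow_left₀ (norm_nonneg _) hx i
  have h2 : (1 + |x|) ^ i ≤ (1 + |x|) ^ P.natDegree :=
    pow_le_pow_right₀ (by linarith [abs_nonneg x]) (Nat.lt_succ_iff.mp (Finset.mem_range.mp hi))
  exact mul_le_mul_of_nonneg_left (h1.trans h2) (norm_nonneg _)

lemma gauss_decay (m : ℕ) : ∃ B : ℝ, ∀ x : ℝ,
    (1 + |x|) ^ m * Real.exp (-(Real.pi * x ^ 2)) ≤ B := by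
  refine ⟨(m.factorial : ℝ) * Real.exp 2, fun x => ?_⟩
  have h0 : (0:ℝ) ≤ 1 + |x| := by positivity
  have h1 : (1 + |x|) ^ m ≤ (m.factorial : ℝ) * Real.exp (1 + |x|) := by
    have h2 : (1 + |x|) ^ m / (m.factorial : ℝ) ≤
        ∑ i ∈ Finset.range (m + 1), (1 + |x|) ^ i / i.factorial :=
      Finset.single_le_sum (f := fun i => (1 + |x|) ^ i / (i.factorial : ℝ))
        (fun i _ => by positivity) (Finset.self_mem_range_succ m)
    have h3 := Real.sum_le_exp_of_nonneg h0 (m + 1)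
    have h4 : (1 + |x|) ^ m / (m.factorial : ℝ) ≤ Real.exp (1 + |x|) := h2.trans h3
    have hm : (0:ℝ) < m.factorial := by positivity
    calc (1 + |x|) ^ m = (m.factorial : ℝ) * ((1 + |x|) ^ m / m.factorial) := by
          field_simp
      _ ≤ (m.factorial : ℝ) * Real.exp (1 + |x|) := by
          exact mul_le_mul_of_nonneg_left h4 hm.le
  calc (1 + |x|) ^ m * Real.exp (-(Real.pi * x ^ 2))
      ≤ (m.factorial : ℝ) * Real.exp (1 + |x|) * Real.exp (-(Real.pi * x ^ 2)) := by
        exact mul_le_mul_of_nonneg_right h1 (Real.exp_nonneg _)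
    _ = (m.factorial : ℝ) * Real.exp (1 + |x| - Real.pi * x ^ 2) := by
        rw [mul_assoc, ← Real.exp_add]; ring_nf
    _ ≤ (m.factorial : ℝ) * Real.exp 2 := by
        apply mul_le_mul_of_nonneg_left _ (by positivity)
        apply Real.exp_le_exp.mpr
        nlinarith [sq_nonneg (|x| - 1), sq_abs x, Real.pi_gt_three]

/-- The modulated gaussian as a Schwartz map. -/
def gaussMap (a : ℝ) : SchwartzMap ℝ ℂ where
  toFun := fQ a 1
  smooth' := (contDiff_fQ a 1).of_le le_top
  decay' := by
    intro k n
    obtain ⟨Cp, hCp0, hCp⟩ := poly_bound ((TT a)^[n] 1)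
    obtain ⟨B, hB⟩ := gauss_decay (k + ((TT a)^[n] 1).natDegree)
    refine ⟨Cp * B, fun x => ?_⟩
    rw [norm_iteratedFDeriv_eq_norm_iteratedDeriv, iteratedDeriv_fQ, norm_fQ]
    have hx1 : ‖x‖ ^ k ≤ (1 + |x|) ^ k := by
      apply pow_le_pow_left₀ (norm_nonneg _)
      rw [Real.norm_eq_abs]; linarith [abs_nonneg x]
    calc ‖x‖ ^ k * (‖(((TT a)^[n] 1).eval (x:ℂ))‖ * Real.exp (-(Real.pi * x ^ 2)))
        ≤ (1 + |x|) ^ k * ((Cp * (1 + |x|) ^ ((TT a)^[n] 1).natDegree) *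
            Real.exp (-(Real.pi * x ^ 2))) := by
          apply mul_le_mul hx1 _ (by positivity) (by positivity)
          exact mul_le_mul_of_nonneg_right (hCp x) (Real.exp_nonneg _)
      _ = Cp * ((1 + |x|) ^ (k + ((TT a)^[n] 1).natDegree) *
            Real.exp (-(Real.pi * x ^ 2))) := by rw [pow_add]; ring
      _ ≤ Cp * B := mul_le_mul_of_nonneg_left (hB x) hCp0

lemma gaussMap_apply (a : ℝ) (x : ℝ) :
    gaussMap a x = Complex.exp (-(Real.pi : ℂ) * x ^ 2 + cc a * x) := by
  show fQ a 1 x = _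
  simp [fQ]

lemma norm_gaussMap (a : ℝ) (x : ℝ) :
    ‖gaussMap a x‖ = Real.exp (-(Real.pi * x ^ 2)) := by
  have := norm_fQ a 1 x
  show ‖fQ a 1 x‖ = _
  simpa using this

lemma fourier_gaussMap (a : ℝ) :
    𝓕 (fun y : ℝ => gaussMap a y) =
      fun t : ℝ => Complex.exp (-(Real.pi : ℂ) * ((t : ℂ) - a) ^ 2) := by
  have key := fourier_gaussian_pi' (b := 1) (by norm_num) (Complex.I * a)
  have e1 : (fun y : ℝ => gaussMap a y) = fun x : ℝ =>
      Complex.exp (-(Real.pi:ℂ) * 1 * (x:ℂ) ^ 2 + 2 * (Real.pi:ℂ) * (Complex.I * a) * x) := by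
    funext x
    rw [gaussMap_apply]
    have harg : -(Real.pi:ℂ) * (x:ℂ) ^ 2 + cc a * x
        = -(Real.pi:ℂ) * 1 * (x:ℂ) ^ 2 + 2 * (Real.pi:ℂ) * (Complex.I * a) * x := by
      simp only [cc]
      push_cast
      ring
    rw [harg]
  rw [e1, key]
  funext t
  have h1 : (1 : ℂ) ^ (1/2 : ℂ) = 1 := Complex.one_cpow _
  rw [h1]
  have h2 : -(Real.pi:ℂ) / 1 * ((t:ℂ) + Complex.I * (Complex.I * a)) ^ 2 =
      -(Real.pi:ℂ) * ((t:ℂ) - a) ^ 2 := by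
    rw [← mul_assoc, Complex.I_mul_I]
    ring
  rw [h2]
  norm_num

lemma interval_bound (μ ν : Measure ℝ) (g : ℝ → ℂ) (hg : ∀ t, ‖g t‖ = 1)
    (hμtemp : ∀ φ : SchwartzMap ℝ ℂ, Integrable (fun x => φ x) μ)
    (hνtemp : ∀ φ : SchwartzMap ℝ ℂ, Integrable (fun t => φ t * g t) ν)
    (hFT : ∀ φ : SchwartzMap ℝ ℂ,
      ∫ x, 𝓕 (fun y => φ y) x ∂μ = ∫ t, φ t * g t ∂ν)
    (c : ℝ) :
    μ (Set.Ioo (c - 2⁻¹) (c + 2⁻¹)) ≤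
      ENNReal.ofReal (Real.exp (Real.pi / 4) *
        ∫ t, Real.exp (-(Real.pi * t ^ 2)) ∂ν) := by
  set M : ℝ := ∫ t, Real.exp (-(Real.pi * t ^ 2)) ∂ν with hM
  set F : ℝ → ℝ := fun x => Real.exp (-(Real.pi * (x - c) ^ 2)) with hF
  set I : Set ℝ := Set.Ioo (c - 2⁻¹) (c + 2⁻¹) with hIdef
  have hFc : ∀ x : ℝ, Complex.exp (-(Real.pi : ℂ) * ((x : ℂ) - c) ^ 2) = ((F x : ℝ) : ℂ) := by
    intro x
    rw [hF, Complex.ofReal_exp]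
    congr 1
    push_cast
    ring
  -- integrability of F wrt μ
  have hInt1 := hμtemp (SchwartzMap.fourierTransformCLM ℝ (gaussMap c))
  have hcoe : (fun x : ℝ => (SchwartzMap.fourierTransformCLM ℝ (gaussMap c)) x)
      = fun x : ℝ => ((F x : ℝ) : ℂ) := by
    funext x
    rw [SchwartzMap.fourierTransformCLM_apply, SchwartzMap.fourier_coe]
    rw [show (⇑(gaussMap c) : ℝ → ℂ) = fun y : ℝ => gaussMap c y from rfl]
    rw [fourier_gaussMap]
    exact hFc x
  rw [hcoe] at hInt1
  have hIntF : Integrable F μ := by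
    have := hInt1.re
    simpa using this
  -- the Fourier identity
  have h1 := hFT (gaussMap c)
  rw [fourier_gaussMap] at h1
  simp_rw [hFc] at h1
  have hOR : ∫ x, ((F x : ℝ) : ℂ) ∂μ = ((∫ x, F x ∂μ : ℝ) : ℂ) := integral_ofReal
  rw [hOR] at h1
  -- bound the ν-side
  have hFM : ∫ x, F x ∂μ ≤ M := by
    have h2 : ∫ x, F x ∂μ = (∫ t, gaussMap c t * g t ∂ν).re := by
      rw [← h1, Complex.ofReal_re]
    rw [h2]
    refine (Complex.re_le_norm _).trans ?_
    refine (norm_integral_le_integral_norm _).trans ?_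
    rw [hM]
    apply le_of_eq
    congr 1
    funext t
    rw [norm_mul, hg, mul_one, norm_gaussMap]
  have hM0 : (0:ℝ) ≤ M := by
    rw [hM]; exact integral_nonneg fun t => Real.exp_nonneg _
  -- lower bound by the measure of the interval
  have hlow : ENNReal.ofReal (Real.exp (-(Real.pi / 4))) * μ I ≤
      ENNReal.ofReal (∫ x, F x ∂μ) := by
    rw [ofReal_integral_eq_lintegral_ofReal hIntF
      (Filter.Eventually.of_forall fun x => Real.exp_nonneg _)]
    calc ENNReal.ofReal (Real.exp (-(Real.pi / 4))) * μ I
        = ∫⁻ _ in I, ENNReal.ofReal (Real.exp (-(Real.pi / 4))) ∂μ := by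
          rw [setLIntegral_const]
      _ ≤ ∫⁻ x in I, ENNReal.ofReal (F x) ∂μ := by
          refine setLIntegral_mono (by fun_prop) ?_
          intro x hx
          apply ENNReal.ofReal_le_ofReal
          apply Real.exp_le_exp.mpr
          rw [hIdef, Set.mem_Ioo] at hx
          have hx2 : (x - c) ^ 2 ≤ 4⁻¹ := by nlinarith [hx.1, hx.2]
          nlinarith [Real.pi_pos]
      _ ≤ ∫⁻ x, ENNReal.ofReal (F x) ∂μ := setLIntegral_le_lintegral _ _
  have h5 : μ I = ENNReal.ofReal (Real.exp (Real.pi / 4)) *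
      (ENNReal.ofReal (Real.exp (-(Real.pi / 4))) * μ I) := by
    rw [← mul_assoc, ← ENNReal.ofReal_mul (Real.exp_nonneg _), ← Real.exp_add]
    norm_num
  calc μ I = ENNReal.ofReal (Real.exp (Real.pi / 4)) *
        (ENNReal.ofReal (Real.exp (-(Real.pi / 4))) * μ I) := h5
    _ ≤ ENNReal.ofReal (Real.exp (Real.pi / 4)) * ENNReal.ofReal (∫ x, F x ∂μ) :=
        mul_le_mul_right hlow _
    _ = ENNReal.ofReal (Real.exp (Real.pi / 4) * ∫ x, F x ∂μ) :=
        (ENNReal.ofReal_mul (Real.exp_nonneg _)).symm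
    _ ≤ ENNReal.ofReal (Real.exp (Real.pi / 4) * M) :=
        ENNReal.ofReal_le_ofReal (mul_le_mul_of_nonneg_left hFM (Real.exp_nonneg _))

lemma cover_Ioo (a b : ℝ) :
    Set.Ioo a b ⊆ ⋃ n ∈ Finset.range ⌈2 * (b - a)⌉₊,
      Set.Ioo ((a + 2⁻¹ + (n : ℝ) * 2⁻¹) - 2⁻¹) ((a + 2⁻¹ + (n : ℝ) * 2⁻¹) + 2⁻¹) := by
  intro x hx
  rw [Set.mem_Ioo] at hx
  set y : ℝ := 2 * (x - a) with hy
  have hy0 : 0 < y := by rw [hy]; linarith [hx.1]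
  set k : ℕ := ⌈y⌉₊ with hk
  have hk1 : 1 ≤ k := Nat.ceil_pos.mpr hy0
  have hkle : (y : ℝ) ≤ k := Nat.le_ceil y
  have hklt : (k : ℝ) < y + 1 := Nat.ceil_lt_add_one hy0.le
  have hcast : ((k - 1 : ℕ) : ℝ) = (k : ℝ) - 1 := by
    rw [Nat.cast_sub hk1, Nat.cast_one]
  refine Set.mem_iUnion₂.mpr ⟨k - 1, Finset.mem_range.mpr ?_, Set.mem_Ioo.mpr ⟨?_, ?_⟩⟩
  · calc k - 1 < k := Nat.sub_lt (by omega) one_pos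
      _ ≤ ⌈2 * (b - a)⌉₊ := Nat.ceil_le_ceil (by linarith [hx.2])
  · rw [hcast]
    have : (k:ℝ) - 1 < y := by linarith
    rw [hy] at this
    linarith
  · rw [hcast]
    have : y < (k:ℝ) + 1 := by linarith
    rw [hy] at this
    linarith

end Stmt0Aux

/-- A positive tempered measure whose distributional Fourier
transform is a (complex) measure with polynomially growing total variation
satisfies `μ((a,b)) ≤ C (1 + b - a)`.  The complex measure `μ̂` is encoded via
its polar decomposition: total variation measure `ν` and a unimodular density
`g`, so that `⟨μ̂, φ⟩ = ∫ φ g dν`. -/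
theorem stmt0 (μ ν : Measure ℝ) (g : ℝ → ℂ)
    (hg : ∀ t, ‖g t‖ = 1)
    (hμtemp : ∀ φ : SchwartzMap ℝ ℂ, Integrable (fun x => φ x) μ)
    (hνtemp : ∀ φ : SchwartzMap ℝ ℂ, Integrable (fun t => φ t * g t) ν)
    (hFT : ∀ φ : SchwartzMap ℝ ℂ,
      ∫ x, 𝓕 (fun y => φ y) x ∂μ = ∫ t, φ t * g t ∂ν)
    (hgrowth : ∃ m > (0:ℝ), ∃ C : ℝ, ∀ R ≥ (1:ℝ),
      ν (Set.Ioo (-R) R) ≤ ENNReal.ofReal (C * R ^ m)) :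
    ∃ C > (0:ℝ), ∀ a b : ℝ, a < b →
      μ (Set.Ioo a b) ≤ ENNReal.ofReal (C * (1 + b - a)) := by
  set M : ℝ := ∫ t, Real.exp (-(Real.pi * t ^ 2)) ∂ν with hM
  have hM0 : (0:ℝ) ≤ M := integral_nonneg fun t => Real.exp_nonneg _
  have hE0 : (0:ℝ) ≤ Real.exp (Real.pi / 4) * M := by positivity
  refine ⟨2 * (Real.exp (Real.pi / 4) * M + 1), by positivity, fun a b hab => ?_⟩
  set B : ENNReal := ENNReal.ofReal (Real.exp (Real.pi / 4) * M) with hB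
  set N : ℕ := ⌈2 * (b - a)⌉₊ with hN
  have key : ∀ c : ℝ, μ (Set.Ioo (c - 2⁻¹) (c + 2⁻¹)) ≤ B :=
    fun c => Stmt0Aux.interval_bound μ ν g hg hμtemp hνtemp hFT c
  have hNle : (N : ℝ) ≤ 2 * (b - a) + 1 :=
    le_of_lt (Nat.ceil_lt_add_one (by linarith))
  calc μ (Set.Ioo a b)
      ≤ μ (⋃ n ∈ Finset.range N, Set.Ioo ((a + 2⁻¹ + (n:ℝ) * 2⁻¹) - 2⁻¹)
          ((a + 2⁻¹ + (n:ℝ) * 2⁻¹) + 2⁻¹)) := measure_mono (Stmt0Aux.cover_Ioo a b)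
    _ ≤ ∑ n ∈ Finset.range N, μ (Set.Ioo ((a + 2⁻¹ + (n:ℝ) * 2⁻¹) - 2⁻¹)
          ((a + 2⁻¹ + (n:ℝ) * 2⁻¹) + 2⁻¹)) := measure_biUnion_finset_le _ _
    _ ≤ ∑ _n ∈ Finset.range N, B := Finset.sum_le_sum fun n _ => key _
    _ = (N : ENNReal) * B := by rw [Finset.sum_const, Finset.card_range, nsmul_eq_mul]
    _ ≤ ENNReal.ofReal (2 * (Real.exp (Real.pi / 4) * M + 1) * (1 + b - a)) := by
        rw [hB, show ((N : ENNReal)) = ENNReal.ofReal (N : ℝ) by simp,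
          ← ENNReal.ofReal_mul (Nat.cast_nonneg N)]
        apply ENNReal.ofReal_le_ofReal
        have hd : 0 < b - a := sub_pos.mpr hab
        nlinarith [mul_le_mul_of_nonneg_right hNle hE0]
end
end

section
/- Let p be an entire function of exponential type that is bounded on the half-plane {Im w ≥ 1}. Then p is bounded on every horizontal strip {|Im w| ≤ r}, and there exist C, σ > 0 such that |p(x + iy)| ≤ C e^{−σy} for all x ∈ ℝ and y ≤ 0. -/
open Complex

lemma stmt12_key (p : ℂ → ℂ) (hp : Differentiable ℂ p)
    {C σ : ℝ} (hC : 0 < C) (hσ : 0 < σ)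
    (htype : ∀ w : ℂ, ‖p w‖ ≤ C * Real.exp (σ * ‖w‖))
    {M : ℝ} (hM : ∀ w : ℂ, 1 ≤ w.im → ‖p w‖ ≤ M) :
    ∀ w : ℂ, w.im ≤ 1 → ‖p w‖ ≤ M * Real.exp ((σ + 1) * (1 - w.im)) := by
  set f : ℂ → ℂ := fun z => p (I - I * z) * Complex.exp (-(σ + 1) * z) with hf
  have hfd : Differentiable ℂ f := by
    apply Differentiable.mul
    · exact hp.comp (by fun_prop)
    · exact Complex.differentiable_exp.comp (by fun_prop)
  have hnorm : ∀ z : ℂ, ‖f z‖ = ‖p (I - I * z)‖ * Real.exp (-(σ + 1) * z.re) := by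
    intro z
    rw [hf]
    simp [Complex.norm_exp]
  have hbound : ∀ z : ℂ, ‖f z‖ ≤ C * Real.exp σ * Real.exp ((2 * σ + 1) * ‖z‖) := by
    intro z
    rw [hnorm]
    have h1 : ‖p (I - I * z)‖ ≤ C * Real.exp (σ * (1 + ‖z‖)) := by
      refine (htype _).trans ?_
      have : ‖I - I * z‖ ≤ 1 + ‖z‖ := by
        refine (norm_sub_le _ _).trans ?_
        simp
      gcongr
    have h2 : Real.exp (-(σ + 1) * z.re) ≤ Real.exp ((σ + 1) * ‖z‖) := by
      apply Real.exp_le_exp.2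
      have := Complex.abs_re_le_norm z
      nlinarith [abs_nonneg z.re, neg_abs_le z.re, le_abs_self z.re]
    calc ‖p (I - I * z)‖ * Real.exp (-(σ + 1) * z.re)
        ≤ (C * Real.exp (σ * (1 + ‖z‖))) * Real.exp ((σ + 1) * ‖z‖) := by
          apply mul_le_mul h1 h2 (Real.exp_pos _).le
          positivity
      _ = C * Real.exp σ * Real.exp ((2 * σ + 1) * ‖z‖) := by
          simp only [mul_assoc, ← Real.exp_add]; congr 1; ring_nf
  have key : ∀ z : ℂ, 0 ≤ z.re → ‖f z‖ ≤ M := by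
    intro z hz
    apply PhragmenLindelof.right_half_plane_of_tendsto_zero_on_real
      hfd.diffContOnCl _ _ _ hz
    · refine ⟨1, one_lt_two, 2 * σ + 1, ?_⟩
      apply Asymptotics.IsBigO.of_bound (C * Real.exp σ)
      filter_upwards with z
      have hb := hbound z
      have : ‖Real.exp ((2 * σ + 1) * ‖z‖ ^ (1:ℝ))‖
          = Real.exp ((2 * σ + 1) * ‖z‖) := by
        rw [Real.norm_eq_abs, abs_of_pos (Real.exp_pos _), Real.rpow_one]
      rw [this]
      exact hb
    · rw [tendsto_zero_iff_norm_tendsto_zero]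
      have hb : ∀ᶠ x : ℝ in Filter.atTop, ‖f (x : ℂ)‖ ≤ C * Real.exp σ * Real.exp (-x) := by
        filter_upwards [Filter.eventually_ge_atTop (0:ℝ)] with x hx
        rw [hnorm]
        have h1 : ‖p (I - I * (x:ℂ))‖ ≤ C * Real.exp (σ * (1 + x)) := by
          refine (htype _).trans ?_
          have : ‖I - I * (x:ℂ)‖ ≤ 1 + x := by
            refine (norm_sub_le _ _).trans ?_
            simp [_root_.abs_of_nonneg hx]
          gcongr
        have : (x : ℂ).re = x := by simp
        rw [this]
        calc ‖p (I - I * (x:ℂ))‖ * Real.exp (-(σ + 1) * x)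
            ≤ (C * Real.exp (σ * (1 + x))) * Real.exp (-(σ + 1) * x) := by
              apply mul_le_mul_of_nonneg_right h1 (Real.exp_pos _).le
          _ = C * Real.exp σ * Real.exp (-x) := by
              simp only [mul_assoc, ← Real.exp_add]; congr 1; ring_nf
      have hlim : Filter.Tendsto (fun x : ℝ => C * Real.exp σ * Real.exp (-x))
          Filter.atTop (nhds 0) := by
        rw [show (0:ℝ) = C * Real.exp σ * 0 by ring]
        exact (Real.tendsto_exp_neg_atTop_nhds_zero).const_mul _
      exact squeeze_zero_norm' (by simpa using hb) hlim
    · intro x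
      rw [hnorm]
      have h1 : I - I * (x * I) = (x : ℂ) + I := by
        rw [mul_comm (x:ℂ) I, ← mul_assoc]
        simp [Complex.I_mul_I]
        ring
      have h2 : ((x : ℂ) * I).re = 0 := by simp
      rw [h1, h2]
      simpa using hM ((x:ℂ) + I) (by simp)
  intro w hw
  have hz : (0:ℝ) ≤ (1 + I * w).re := by simp; linarith
  have hwz : I - I * (1 + I * w) = w := by
    rw [mul_add, ← mul_assoc, Complex.I_mul_I]
    ring
  have := key (1 + I * w) hz
  rw [hnorm, hwz] at this
  have hre : (1 + I * w).re = 1 - w.im := by simp; ring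
  rw [hre] at this
  have hE : 0 < Real.exp (-(σ + 1) * (1 - w.im)) := Real.exp_pos _
  calc ‖p w‖ = (‖p w‖ * Real.exp (-(σ + 1) * (1 - w.im))) *
        Real.exp ((σ + 1) * (1 - w.im)) := by
        rw [mul_assoc, ← Real.exp_add]
        have h0 : -(σ + 1) * (1 - w.im) + (σ + 1) * (1 - w.im) = 0 := by ring
        rw [h0, Real.exp_zero, mul_one]
    _ ≤ M * Real.exp ((σ + 1) * (1 - w.im)) := by
        apply mul_le_mul_of_nonneg_right this (Real.exp_pos _).le

/-- an entire function of exponential type bounded on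
`{Im w ≥ 1}` is bounded on every horizontal strip and satisfies
`|p(x+iy)| ≤ C e^{-σ y}` for `y ≤ 0`. -/
theorem stmt12 (p : ℂ → ℂ) (hp : Differentiable ℂ p)
    (htype : ∃ C > (0:ℝ), ∃ σ > (0:ℝ), ∀ w : ℂ,
      ‖p w‖ ≤ C * Real.exp (σ * ‖w‖))
    (hupper : ∃ M : ℝ, ∀ w : ℂ, 1 ≤ w.im → ‖p w‖ ≤ M) :
    (∀ r > (0:ℝ), ∃ M : ℝ, ∀ w : ℂ, |w.im| ≤ r → ‖p w‖ ≤ M) ∧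
    ∃ C > (0:ℝ), ∃ σ > (0:ℝ), ∀ x y : ℝ, y ≤ 0 →
      ‖p (x + y * Complex.I)‖ ≤ C * Real.exp (-σ * y) := by
  obtain ⟨C, hC, σ, hσ, htype⟩ := htype
  obtain ⟨M, hM⟩ := hupper
  have hM0 : 0 ≤ M := le_trans (norm_nonneg _) (hM I (by simp))
  have key := stmt12_key p hp hC hσ htype hM
  constructor
  · intro r hr
    refine ⟨M * Real.exp ((σ + 1) * (1 + r)), ?_⟩
    intro w hw
    rcases le_total w.im 1 with h | h
    · refine (key w h).trans ?_
      have h1 : (σ + 1) * (1 - w.im) ≤ (σ + 1) * (1 + r) := by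
        have := abs_le.1 hw
        nlinarith
      gcongr
    · refine (hM w h).trans ?_
      nlinarith [Real.one_le_exp (show 0 ≤ (σ + 1) * (1 + r) by nlinarith)]
  · refine ⟨(M + 1) * Real.exp (σ + 1), by positivity, σ + 1, by linarith, ?_⟩
    intro x y hy
    have him : ((x : ℂ) + y * I).im = y := by simp
    have := key ((x:ℂ) + y * I) (by rw [him]; linarith)
    rw [him] at this
    refine this.trans ?_
    rw [show (σ + 1) * (1 - y) = (σ + 1) + (-(σ+1) * y) by ring, Real.exp_add,
      ← mul_assoc]
    have : M * Real.exp (σ + 1) ≤ (M + 1) * Real.exp (σ + 1) := by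
      nlinarith [Real.exp_pos (σ + 1)]
    apply mul_le_mul_of_nonneg_right this (Real.exp_pos _).le
end

section
/- Let a_s ∈ ℂ for s in a locally finite set S₋ ⊂ (−∞, s₁] with s₁ < 0, with ∑_{s ∈ S₋, s > −R} |a_s| = O(R^m) for some m > 0. Then for every w with Im w > 0, the function exp(∑_{s∈S₋} (a_s/s) e^{−2πisw}) admits an absolutely convergent expansion ∑_{u∈U} b_u e^{−2πiuw}, where U is the set of all finite sums of elements of S₋ (including 0) and b_u ∈ ℂ. -/
open Set Complex
open scoped Real

private lemma auxGeom (k : ℕ) (r : ℝ) (hr0 : 0 < r) (hr1 : r < 1) :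
    Summable (fun n : ℕ => ((n:ℝ)+1)^k * r^n) := by
  have hs : Summable (fun n : ℕ => (n:ℝ)^k * r^n) :=
    summable_pow_mul_geometric_of_norm_lt_one k (by rwa [Real.norm_eq_abs, abs_of_pos hr0])
  have h1 : Summable (fun n : ℕ => ((n:ℝ)+1)^k * r^(n+1)) := by
    have := (summable_nat_add_iff (f := fun n : ℕ => (n:ℝ)^k * r^n) 1).2 hs
    simpa using this
  have h2 := h1.mul_left r⁻¹
  refine h2.congr fun n => ?_
  field_simp [pow_succ]
  ring

lemma auxSum1 (Sneg : Set ℝ) (s₁ : ℝ) (hs₁ : s₁ < 0)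
    (hbound : Sneg ⊆ Set.Iic s₁)
    (hfin : ∀ c d : ℝ, (Sneg ∩ Set.Icc c d).Finite)
    (a : ℝ → ℂ) (C m : ℝ) (hm : 0 < m)
    (hg : ∀ R ≥ (1:ℝ), ∑ s ∈ (hfin (-R) 0).toFinset, ‖a s‖ ≤ C * R ^ m)
    (t : ℝ) (ht : 0 < t) :
    Summable (fun s : Sneg => ‖a s / ((s:ℝ):ℂ)‖ * Real.exp (2 * π * s * t)) := by
  classical
  set k := ⌈m⌉₊ with hk
  set r := Real.exp (-(2*π*t)) with hrdef
  have hπ : 0 < π := Real.pi_pos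
  have hr0 : 0 < r := Real.exp_pos _
  have hr1 : r < 1 := by
    rw [hrdef, Real.exp_lt_one_iff]
    nlinarith
  have hC : 0 ≤ C := by
    have h1 := hg 1 le_rfl
    have h0 : (0:ℝ) ≤ ∑ s ∈ (hfin (-1) 0).toFinset, ‖a s‖ :=
      Finset.sum_nonneg fun _ _ => norm_nonneg _
    simpa [Real.one_rpow] using le_trans h0 h1
  have hs₁' : (0:ℝ) < -s₁ := by linarith
  have hgeom : Summable (fun n : ℕ => C * (((n:ℝ)+1)^k * r^n)) :=
    (auxGeom k r hr0 hr1).mul_left C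
  apply summable_of_sum_le (c := (-s₁)⁻¹ * ∑' n : ℕ, C * (((n:ℝ)+1)^k * r^n))
  · intro s
    exact mul_nonneg (norm_nonneg _) (Real.exp_pos _).le
  · intro F
    set g : Sneg → ℕ := fun s => ⌊-(s:ℝ)⌋₊ with hgdef
    -- pointwise bound
    have key : ∀ s : Sneg, ‖a s / ((s:ℝ):ℂ)‖ * Real.exp (2 * π * s * t)
        ≤ (-s₁)⁻¹ * (‖a (s:ℝ)‖ * r ^ (g s)) := by
      intro s
      have hsle : (s:ℝ) ≤ s₁ := hbound s.2
      have hsneg : (s:ℝ) < 0 := lt_of_le_of_lt hsle hs₁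
      have hfloor : ((g s : ℝ)) ≤ -(s:ℝ) := Nat.floor_le (by linarith)
      have h1 : (s:ℝ) ≤ -(g s : ℝ) := by linarith
      have hexp : Real.exp (2 * π * s * t) ≤ r ^ (g s) := by
        rw [hrdef, ← Real.exp_nat_mul]
        apply Real.exp_le_exp.2
        have : (2:ℝ) * π * t > 0 := by positivity
        nlinarith
      have hnorm : ‖a s / ((s:ℝ):ℂ)‖ ≤ (-s₁)⁻¹ * ‖a (s:ℝ)‖ := by
        rw [norm_div, Complex.norm_real, Real.norm_eq_abs, abs_of_neg hsneg]
        rw [div_le_iff₀ (by linarith)]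
        have h2 : (-s₁)⁻¹ * ‖a (s:ℝ)‖ * -(s:ℝ) = ‖a (s:ℝ)‖ * ((-s₁)⁻¹ * -(s:ℝ)) := by ring
        rw [h2]
        have h3 : (1:ℝ) ≤ (-s₁)⁻¹ * -(s:ℝ) := by
          rw [← div_eq_inv_mul, le_div_iff₀ hs₁']
          linarith
        nlinarith [norm_nonneg (a (s:ℝ))]
      calc ‖a s / ((s:ℝ):ℂ)‖ * Real.exp (2 * π * s * t)
          ≤ ((-s₁)⁻¹ * ‖a (s:ℝ)‖) * r ^ (g s) := by
            apply mul_le_mul hnorm hexp (Real.exp_pos _).le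
            positivity
        _ = (-s₁)⁻¹ * (‖a (s:ℝ)‖ * r ^ (g s)) := by ring
    have step1 : ∑ s ∈ F, ‖a s / ((s:ℝ):ℂ)‖ * Real.exp (2 * π * s * t)
        ≤ (-s₁)⁻¹ * ∑ s ∈ F, (‖a (s:ℝ)‖ * r ^ (g s)) := by
      rw [Finset.mul_sum]
      exact Finset.sum_le_sum fun s _ => key s
    -- fiberwise decomposition
    set N := F.sup g with hN
    have hmaps : ∀ s ∈ F, g s ∈ Finset.range (N+1) := by
      intro s hs
      rw [Finset.mem_range, Nat.lt_succ_iff]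
      exact Finset.le_sup hs
    have step2 : ∑ s ∈ F, (‖a (s:ℝ)‖ * r ^ (g s))
        = ∑ n ∈ Finset.range (N+1), ∑ s ∈ F.filter (fun s => g s = n), (‖a (s:ℝ)‖ * r ^ (g s)) :=
      (Finset.sum_fiberwise_of_maps_to hmaps _).symm
    have step3 : ∀ n, ∑ s ∈ F.filter (fun s => g s = n), (‖a (s:ℝ)‖ * r ^ (g s))
        ≤ C * (((n:ℝ)+1)^k * r^n) := by
      intro n
      have e1 : ∑ s ∈ F.filter (fun s => g s = n), (‖a (s:ℝ)‖ * r ^ (g s))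
          = (∑ s ∈ F.filter (fun s => g s = n), ‖a (s:ℝ)‖) * r ^ n := by
        rw [Finset.sum_mul]
        apply Finset.sum_congr rfl
        intro s hs
        rw [Finset.mem_filter] at hs
        rw [hs.2]
      rw [e1]
      have hsub : ∑ s ∈ F.filter (fun s => g s = n), ‖a (s:ℝ)‖
          ≤ ∑ x ∈ (hfin (-((n:ℝ)+1)) 0).toFinset, ‖a x‖ := by
        have himg : ∑ s ∈ F.filter (fun s => g s = n), ‖a (s:ℝ)‖
            = ∑ x ∈ (F.filter (fun s => g s = n)).image (fun s : Sneg => (s:ℝ)), ‖a x‖ :=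
          (Finset.sum_image (g := fun s : Sneg => (s:ℝ)) (f := fun x => ‖a x‖)
            (fun x _ y _ h => Subtype.coe_injective h)).symm
        rw [himg]
        apply Finset.sum_le_sum_of_subset_of_nonneg
        · intro x hx
          rw [Finset.mem_image] at hx
          obtain ⟨s, hs, rfl⟩ := hx
          rw [Finset.mem_filter] at hs
          rw [Set.Finite.mem_toFinset]
          have hsle : (s:ℝ) ≤ s₁ := hbound s.2
          have hlt : -(s:ℝ) < (g s : ℝ) + 1 := Nat.lt_floor_add_one _
          refine ⟨s.2, ?_, by linarith⟩
          rw [← hs.2] at *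
          push_cast
          linarith
        · intro _ _ _; exact norm_nonneg _
      have hgn := hg ((n:ℝ)+1) (by push_cast; linarith [Nat.cast_nonneg (α := ℝ) n])
      have hpow : ((n:ℝ)+1) ^ m ≤ ((n:ℝ)+1)^k := by
        have h1 : (1:ℝ) ≤ (n:ℝ)+1 := by linarith [Nat.cast_nonneg (α := ℝ) n]
        calc ((n:ℝ)+1) ^ m ≤ ((n:ℝ)+1) ^ (k:ℝ) :=
              Real.rpow_le_rpow_of_exponent_le h1 (Nat.le_ceil m)
          _ = ((n:ℝ)+1)^k := Real.rpow_natCast _ _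
      have hrn : (0:ℝ) ≤ r ^ n := by positivity
      calc (∑ s ∈ F.filter (fun s => g s = n), ‖a (s:ℝ)‖) * r ^ n
          ≤ (C * ((n:ℝ)+1) ^ m) * r ^ n := by
            apply mul_le_mul_of_nonneg_right _ hrn
            exact le_trans hsub hgn
        _ ≤ (C * (((n:ℝ)+1)^k)) * r ^ n := by
            apply mul_le_mul_of_nonneg_right _ hrn
            exact mul_le_mul_of_nonneg_left hpow hC
        _ = C * (((n:ℝ)+1)^k * r^n) := by ring
    have step4 : ∑ n ∈ Finset.range (N+1), ∑ s ∈ F.filter (fun s => g s = n), (‖a (s:ℝ)‖ * r ^ (g s))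
        ≤ ∑' n : ℕ, C * (((n:ℝ)+1)^k * r^n) := by
      calc _ ≤ ∑ n ∈ Finset.range (N+1), C * (((n:ℝ)+1)^k * r^n) :=
            Finset.sum_le_sum fun n _ => step3 n
        _ ≤ ∑' n : ℕ, C * (((n:ℝ)+1)^k * r^n) := by
            apply Summable.sum_le_tsum _ (fun n _ => by positivity) hgeom
    calc ∑ s ∈ F, ‖a s / ((s:ℝ):ℂ)‖ * Real.exp (2 * π * s * t)
        ≤ (-s₁)⁻¹ * ∑ s ∈ F, (‖a (s:ℝ)‖ * r ^ (g s)) := step1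
      _ ≤ (-s₁)⁻¹ * ∑' n : ℕ, C * (((n:ℝ)+1)^k * r^n) := by
          apply mul_le_mul_of_nonneg_left _ (by positivity)
          rw [step2]; exact step4

private lemma auxPow (Sneg : Set ℝ) (c : Sneg → ℂ) (hc : Summable (fun s => ‖c s‖)) (n : ℕ) :
    Summable (fun v : Fin n → Sneg => ‖∏ i, c (v i)‖) ∧
    (∑' s, c s)^n = ∑' v : Fin n → Sneg, ∏ i, c (v i) := by
  induction n with
  | zero =>
    constructor
    · exact Summable.of_finite
    · rw [pow_zero]
      have h1 : ∀ v : Fin 0 → Sneg, ∏ i, c (v i) = 1 := fun v => by simp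
      rw [tsum_congr h1]
      simp [tsum_const]
  | succ n ih =>
    have hpt : ∀ v : Fin (n+1) → Sneg, ∏ i, c (v i) = c (v 0) * ∏ i : Fin n, c (v i.succ) :=
      fun v => Fin.prod_univ_succ _
    have h1 : Summable (fun p : Sneg × (Fin n → Sneg) => ‖c p.1 * ∏ i, c (p.2 i)‖) :=
      Summable.mul_norm (f := c) (g := fun v : Fin n → Sneg => ∏ i, c (v i)) hc ih.1
    have heq : ∀ v : Fin (n+1) → Sneg,
        c ((Fin.consEquiv (fun _ : Fin (n+1) => Sneg)).symm v).1 * ∏ i, c (((Fin.consEquiv (fun _ : Fin (n+1) => Sneg)).symm v).2 i)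
          = ∏ i, c (v i) := by
      intro v
      rw [Fin.prod_univ_succ (f := fun i => c (v i))]
      simp [Fin.consEquiv, Fin.tail]
    constructor
    · have h2 := ((Fin.consEquiv (fun _ : Fin (n+1) => Sneg)).symm.summable_iff
        (f := fun p : Sneg × (Fin n → Sneg) => ‖c p.1 * ∏ i, c (p.2 i)‖)).2 h1
      refine h2.congr fun v => ?_
      simp only [Function.comp]
      rw [heq v]
    · rw [pow_succ, mul_comm, ih.2, tsum_mul_tsum_of_summable_norm (f := c) (g := fun v : Fin n → Sneg => ∏ i, c (v i)) hc ih.1,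
        ← (Fin.consEquiv (fun _ : Fin (n+1) => Sneg)).symm.tsum_eq (fun p : Sneg × (Fin n → Sneg) => c p.1 * ∏ i, c (p.2 i))]
      exact tsum_congr heq

private lemma auxAlpha (Sneg : Set ℝ) (c : Sneg → ℂ) (hc : Summable (fun s => ‖c s‖)) :
    Summable (fun x : (n:ℕ) × (Fin n → Sneg) => (Nat.factorial x.1 : ℝ)⁻¹ * ∏ i, ‖c (x.2 i)‖) := by
  classical
  set S := ∑' s, ‖c s‖ with hS
  have hS0 : 0 ≤ S := tsum_nonneg fun _ => norm_nonneg _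
  apply summable_of_sum_le (c := Real.exp S)
  · intro x
    have : (0:ℝ) ≤ ∏ i, ‖c (x.2 i)‖ := Finset.prod_nonneg fun _ _ => norm_nonneg _
    positivity
  · intro F
    set N := F.sup (fun x => x.1) with hN
    set G : Finset Sneg := F.biUnion (fun x => Finset.image x.2 Finset.univ) with hG
    have hsub : F ⊆ (Finset.range (N+1)).sigma (fun n => Fintype.piFinset (fun _ : Fin n => G)) := by
      intro x hx
      rw [Finset.mem_sigma]
      refine ⟨by rw [Finset.mem_range, Nat.lt_succ_iff]; exact Finset.le_sup hx, ?_⟩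
      rw [Fintype.mem_piFinset]
      intro i
      exact Finset.mem_biUnion.2 ⟨x, hx, Finset.mem_image_of_mem _ (Finset.mem_univ i)⟩
    have hGle : ∑ s ∈ G, ‖c s‖ ≤ S := Summable.sum_le_tsum G (fun _ _ => norm_nonneg _) hc
    have hGnn : (0:ℝ) ≤ ∑ s ∈ G, ‖c s‖ := Finset.sum_nonneg fun _ _ => norm_nonneg _
    calc ∑ x ∈ F, (Nat.factorial x.1 : ℝ)⁻¹ * ∏ i, ‖c (x.2 i)‖
        ≤ ∑ x ∈ (Finset.range (N+1)).sigma (fun n => Fintype.piFinset (fun _ : Fin n => G)),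
            (Nat.factorial x.1 : ℝ)⁻¹ * ∏ i, ‖c (x.2 i)‖ := by
          apply Finset.sum_le_sum_of_subset_of_nonneg hsub
          intro x _ _
          have : (0:ℝ) ≤ ∏ i, ‖c (x.2 i)‖ := Finset.prod_nonneg fun _ _ => norm_nonneg _
          positivity
      _ = ∑ n ∈ Finset.range (N+1), ∑ v ∈ Fintype.piFinset (fun _ : Fin n => G),
            (Nat.factorial n : ℝ)⁻¹ * ∏ i, ‖c (v i)‖ := Finset.sum_sigma _ _ _
      _ = ∑ n ∈ Finset.range (N+1), (Nat.factorial n : ℝ)⁻¹ * (∑ s ∈ G, ‖c s‖)^n := by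
          apply Finset.sum_congr rfl
          intro n _
          rw [← Finset.mul_sum, ← Finset.prod_univ_sum (fun _ : Fin n => G) (fun _ s => ‖c s‖)]
          rw [Finset.prod_const, Finset.card_univ, Fintype.card_fin]
      _ ≤ ∑ n ∈ Finset.range (N+1), (Nat.factorial n : ℝ)⁻¹ * S^n := by
          apply Finset.sum_le_sum
          intro n _
          have : (∑ s ∈ G, ‖c s‖)^n ≤ S^n := pow_le_pow_left₀ hGnn hGle n
          have h2 : (0:ℝ) ≤ (Nat.factorial n : ℝ)⁻¹ := by positivity
          exact mul_le_mul_of_nonneg_left this h2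
      _ = ∑ n ∈ Finset.range (N+1), S^n / (Nat.factorial n) := by
          apply Finset.sum_congr rfl; intro n _; rw [div_eq_mul_inv]; ring
      _ ≤ ∑' n : ℕ, S^n / (Nat.factorial n) := by
          apply Summable.sum_le_tsum _ (fun n _ => by positivity) (Real.summable_pow_div_factorial S)
      _ = Real.exp S := by
          rw [Real.exp_eq_exp_ℝ, NormedSpace.exp_eq_tsum_div]


private noncomputable def stmtCoeff (Sneg : Set ℝ) (a : ℝ → ℂ) (x : (n:ℕ) × (Fin n → Sneg)) : ℂ :=
  (Nat.factorial x.1 : ℂ)⁻¹ * ∏ i, (a (x.2 i) / ((x.2 i : ℝ):ℂ))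

private def stmtSum (Sneg : Set ℝ) (x : (n:ℕ) × (Fin n → Sneg)) : ℝ := ∑ i, ((x.2 i : ℝ))

private noncomputable def stmtB (Sneg : Set ℝ) (a : ℝ → ℂ) (u : ℝ) : ℂ :=
  ∑' x : {x : (n:ℕ) × (Fin n → Sneg) // stmtSum Sneg x = u}, stmtCoeff Sneg a x

/-- on the upper half-plane, `exp(∑_{s∈S₋}(a_s/s)e^{-2πisw})`
admits an absolutely convergent Dirichlet-type expansion over the set `U` of
all finite sums of elements of `S₋`. -/
theorem stmt14 (Sneg : Set ℝ) (s₁ : ℝ) (hs₁ : s₁ < 0)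
    (hbound : Sneg ⊆ Set.Iic s₁)
    (hfin : ∀ c d : ℝ, (Sneg ∩ Set.Icc c d).Finite)
    (a : ℝ → ℂ)
    (hgrowth : ∃ C : ℝ, ∃ m > (0:ℝ), ∀ R ≥ (1:ℝ),
      ∑ s ∈ (hfin (-R) 0).toFinset, ‖a s‖ ≤ C * R ^ m)
    (U : Set ℝ)
    (hU : U = {x : ℝ | ∃ l : List ℝ, (∀ s ∈ l, s ∈ Sneg) ∧ l.sum = x}) :
    ∃ b : ℝ → ℂ, ∀ w : ℂ, 0 < w.im →
      Summable (fun s : Sneg =>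
        ‖(a s / (s : ℝ)) * Complex.exp (-(2 * π * Complex.I * (s : ℝ) * w))‖) ∧
      Summable (fun u : U =>
        ‖b u * Complex.exp (-(2 * π * Complex.I * (u : ℝ) * w))‖) ∧
      Complex.exp (∑' s : Sneg,
          (a s / (s : ℝ)) * Complex.exp (-(2 * π * Complex.I * (s : ℝ) * w))) =
        ∑' u : U, b u * Complex.exp (-(2 * π * Complex.I * (u : ℝ) * w)) := by
  classical
  obtain ⟨C, m, hm, hgr⟩ := hgrowth
  refine ⟨stmtB Sneg a, fun w hw => ?_⟩
  set c : Sneg → ℂ := fun s =>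
    (a s / (s : ℝ)) * Complex.exp (-(2 * π * Complex.I * (s : ℝ) * w)) with hcdef
  set α := (n:ℕ) × (Fin n → Sneg) with hα
  set E : ℝ → ℂ := fun u => Complex.exp (-(2 * π * Complex.I * (u : ℝ) * w)) with hEdef
  -- norm of c
  have hre : ∀ u : ℝ, (-(2 * (π:ℂ) * Complex.I * (u:ℂ) * w)).re = 2 * π * u * w.im := by
    intro u
    simp [Complex.mul_re, Complex.mul_im]
  have hnormc : ∀ s : Sneg, ‖c s‖ = ‖a s / ((s:ℝ):ℂ)‖ * Real.exp (2 * π * s * w.im) := by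
    intro s
    rw [hcdef]
    simp only
    rw [norm_mul, Complex.norm_exp, hre]
  have hcsum : Summable (fun s : Sneg => ‖c s‖) := by
    refine Summable.congr ?_ (fun s => (hnormc s).symm)
    exact auxSum1 Sneg s₁ hs₁ hbound hfin a C m hm hgr w.im hw
  -- key identity for terms
  have hterm : ∀ x : α, stmtCoeff Sneg a x * E (stmtSum Sneg x)
      = (Nat.factorial x.1 : ℂ)⁻¹ * ∏ i, c (x.2 i) := by
    rintro ⟨n, v⟩
    have h1 : (-(2 * (π:ℂ) * Complex.I * ((stmtSum Sneg ⟨n, v⟩ : ℝ):ℂ) * w))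
        = ∑ i : Fin n, -(2 * (π:ℂ) * Complex.I * ((v i : ℝ):ℂ) * w) := by
      rw [stmtSum]
      push_cast
      rw [Finset.mul_sum, Finset.sum_mul, ← Finset.sum_neg_distrib]
    rw [hEdef]
    simp only
    rw [h1, Complex.exp_sum, stmtCoeff, hcdef, mul_assoc, ← Finset.prod_mul_distrib]
  have hnormterm : ∀ x : α, ‖stmtCoeff Sneg a x * E (stmtSum Sneg x)‖
      = (Nat.factorial x.1 : ℝ)⁻¹ * ∏ i, ‖c (x.2 i)‖ := by
    intro x
    rw [hterm x, norm_mul, norm_inv, norm_prod]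
    congr 1
    congr 1
    simp
  have halpha : Summable (fun x : α => ‖stmtCoeff Sneg a x * E (stmtSum Sneg x)‖) :=
    Summable.congr (auxAlpha Sneg c hcsum) (fun x => (hnormterm x).symm)
  have halphas : Summable (fun x : α => stmtCoeff Sneg a x * E (stmtSum Sneg x)) :=
    halpha.of_norm
  -- the fiber map into U
  have hmemU : ∀ x : α, stmtSum Sneg x ∈ U := by
    intro x
    rw [hU]
    refine ⟨List.ofFn (fun i => ((x.2 i : ℝ))), ?_, by rw [List.sum_ofFn]; rfl⟩
    intro s hs
    rw [List.mem_ofFn] at hs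
    obtain ⟨i, rfl⟩ := hs
    exact (x.2 i).2
  set key : α → U := fun x => ⟨stmtSum Sneg x, hmemU x⟩ with hkey
  -- fiberwise tsum identity
  have hfiber : ∀ u : U, (∑' x : {x : α // key x = u},
      stmtCoeff Sneg a x.1 * E (stmtSum Sneg x.1)) = stmtB Sneg a u * E u := by
    intro u
    have h1 : ∀ x : {x : α // key x = u},
        stmtCoeff Sneg a x.1 * E (stmtSum Sneg x.1) = stmtCoeff Sneg a x.1 * E u := by
      rintro ⟨x, hx⟩
      have : stmtSum Sneg x = (u : ℝ) := congrArg Subtype.val hx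
      rw [this]
    rw [tsum_congr h1, tsum_mul_right]
    congr 1
    rw [stmtB]
    have hiff : ∀ x : α, stmtSum Sneg x = (u:ℝ) ↔ key x = u :=
      fun x => ⟨fun h => Subtype.ext h, fun h => congrArg Subtype.val h⟩
    rw [← (Equiv.subtypeEquivRight hiff).tsum_eq
      (fun x : {x : α // key x = u} => stmtCoeff Sneg a x.1)]
    exact tsum_congr fun x => rfl
  -- summability over the sigma of fibers
  have hsignorm : Summable (fun p : Σ u : U, {x : α // key x = u} =>
      ‖stmtCoeff Sneg a p.2.1 * E (stmtSum Sneg p.2.1)‖) :=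
    ((Equiv.sigmaFiberEquiv key).summable_iff
      (f := fun x : α => ‖stmtCoeff Sneg a x * E (stmtSum Sneg x)‖)).2 halpha
  have hsigs : Summable (fun p : Σ u : U, {x : α // key x = u} =>
      stmtCoeff Sneg a p.2.1 * E (stmtSum Sneg p.2.1)) := hsignorm.of_norm
  refine ⟨hcsum, ?_, ?_⟩
  -- second summability
  · have h2 : Summable (fun u : U => ∑' x : {x : α // key x = u},
        ‖stmtCoeff Sneg a x.1 * E (stmtSum Sneg x.1)‖) := hsignorm.sigma
    refine Summable.of_nonneg_of_le (fun u => norm_nonneg _) (fun u => ?_) h2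
    have hfs : Summable (fun x : {x : α // key x = u} =>
        ‖stmtCoeff Sneg a x.1 * E (stmtSum Sneg x.1)‖) :=
      halpha.comp_injective Subtype.coe_injective
    calc ‖stmtB Sneg a u * E u‖
        = ‖∑' x : {x : α // key x = u}, stmtCoeff Sneg a x.1 * E (stmtSum Sneg x.1)‖ := by
          rw [hfiber u]
      _ ≤ ∑' x : {x : α // key x = u}, ‖stmtCoeff Sneg a x.1 * E (stmtSum Sneg x.1)‖ :=
          norm_tsum_le_tsum_norm hfs
  -- main identity
  · have h3 : ∀ n : ℕ, ((Nat.factorial n : ℂ))⁻¹ • (∑' s : Sneg, c s)^n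
        = ∑' v : Fin n → Sneg, stmtCoeff Sneg a ⟨n, v⟩ * E (stmtSum Sneg ⟨n, v⟩) := by
      intro n
      rw [(auxPow Sneg c hcsum n).2, smul_eq_mul, ← tsum_mul_left]
      exact tsum_congr fun v => (hterm ⟨n, v⟩).symm
    calc Complex.exp (∑' s : Sneg, c s)
        = ∑' n : ℕ, ((Nat.factorial n : ℂ))⁻¹ • (∑' s : Sneg, c s)^n := by
          rw [Complex.exp_eq_exp_ℂ, NormedSpace.exp_eq_tsum ℂ]
      _ = ∑' (n : ℕ), ∑' v : Fin n → Sneg,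
            stmtCoeff Sneg a ⟨n, v⟩ * E (stmtSum Sneg ⟨n, v⟩) := tsum_congr h3
      _ = ∑' x : α, stmtCoeff Sneg a x * E (stmtSum Sneg x) := (Summable.tsum_sigma halphas).symm
      _ = ∑' p : Σ u : U, {x : α // key x = u},
            stmtCoeff Sneg a p.2.1 * E (stmtSum Sneg p.2.1) :=
          ((Equiv.sigmaFiberEquiv key).tsum_eq
            (fun x : α => stmtCoeff Sneg a x * E (stmtSum Sneg x))).symm
      _ = ∑' u : U, ∑' x : {x : α // key x = u},
            stmtCoeff Sneg a x.1 * E (stmtSum Sneg x.1) := Summable.tsum_sigma hsigs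
      _ = ∑' u : U, stmtB Sneg a u * E u := tsum_congr hfiber
end

section
/- Let p be an entire function of exponential type satisfying |p(w)| ≤ C for Im w ≥ 0 and |p(w)| ≤ C e^{σ|Im w|} for Im w ≤ 0, and let ε > 0. Define p_ε(w) = p(w)(sin(πεw)/(πεw))². Then p_ε is an entire function of exponential type, p_ε restricted to every horizontal line lies in L¹ ∩ L², and its inverse Fourier transform p̌_ε is a continuous function vanishing outside the interval (−σ/(2π) − ε, ε). -/
open MeasureTheory Set Complex Filter
open scoped Real Topology

lemma aux_norm_exp (z : ℂ) : ‖Complex.exp z‖ = Real.exp z.re := by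
  rw [Complex.norm_exp]

lemma aux_exp_mul_I_re (z : ℂ) : (z * I).re = -z.im := by simp

lemma aux_norm_cos (z : ℂ) : ‖Complex.cos z‖ ≤ Real.exp |z.im| := by
  have h : Complex.cos z = (Complex.exp (z * I) + Complex.exp (-z * I)) / 2 := rfl
  rw [h]
  have h1 : ‖Complex.exp (z * I)‖ ≤ Real.exp |z.im| := by
    rw [aux_norm_exp]
    exact Real.exp_le_exp.2 (by simp only [aux_exp_mul_I_re]; exact neg_le_abs _)
  have h2 : ‖Complex.exp (-z * I)‖ ≤ Real.exp |z.im| := by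
    rw [aux_norm_exp]
    exact Real.exp_le_exp.2 (by simpa using le_abs_self z.im)
  rw [norm_div, Complex.norm_ofNat]
  have := norm_add_le (Complex.exp (z * I)) (Complex.exp (-z * I))
  linarith

lemma aux_norm_sin (z : ℂ) : ‖Complex.sin z‖ ≤ Real.exp |z.im| := by
  have h : Complex.sin z = (Complex.exp (-z * I) - Complex.exp (z * I)) * I / 2 := rfl
  rw [h]
  have h1 : ‖Complex.exp (z * I)‖ ≤ Real.exp |z.im| := by
    rw [aux_norm_exp]
    exact Real.exp_le_exp.2 (by simp only [aux_exp_mul_I_re]; exact neg_le_abs _)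
  have h2 : ‖Complex.exp (-z * I)‖ ≤ Real.exp |z.im| := by
    rw [aux_norm_exp]
    exact Real.exp_le_exp.2 (by simpa using le_abs_self z.im)
  rw [norm_div, norm_mul, Complex.norm_I, mul_one, Complex.norm_ofNat]
  have := norm_sub_le (Complex.exp (-z * I)) (Complex.exp (z * I))
  linarith

lemma aux_norm_sin_le_mul (z : ℂ) : ‖Complex.sin z‖ ≤ ‖z‖ * Real.exp |z.im| := by
  have hder : ∀ t : ℝ, HasDerivAt (fun t : ℝ => Complex.sin (t * z))
      (Complex.cos (t * z) * z) t := by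
    intro t
    have h1 : HasDerivAt (fun w : ℂ => Complex.sin (w * z)) (Complex.cos ((t:ℂ) * z) * z) t := by
      exact (Complex.hasDerivAt_sin ((t:ℂ) * z)).comp (t:ℂ)
        (hasDerivAt_mul_const z)
    exact h1.comp_ofReal
  have hcont : Continuous fun t : ℝ => Complex.cos (t * z) * z := by
    fun_prop
  have hint : IntervalIntegrable (fun t : ℝ => Complex.cos (t * z) * z) volume 0 1 :=
    hcont.intervalIntegrable 0 1
  have hftc := intervalIntegral.integral_eq_sub_of_hasDerivAt
    (fun t _ => hder t) hint
  have : Complex.sin z = ∫ t in (0:ℝ)..1, Complex.cos (t * z) * z := by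
    simpa using hftc.symm
  rw [this]
  have hb : ∀ t ∈ Set.uIoc (0:ℝ) 1, ‖Complex.cos (t * z) * z‖ ≤ Real.exp |z.im| * ‖z‖ := by
    intro t ht
    rw [Set.uIoc_of_le zero_le_one] at ht
    rw [norm_mul]
    gcongr
    refine (aux_norm_cos _).trans (Real.exp_le_exp.2 ?_)
    have : ((t:ℂ) * z).im = t * z.im := by simp
    rw [this, abs_mul]
    calc |t| * |z.im| ≤ 1 * |z.im| := by
          gcongr
          rw [abs_le]; constructor <;> [linarith [ht.1]; linarith [ht.2]]
      _ = |z.im| := one_mul _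
  have := intervalIntegral.norm_integral_le_of_norm_le_const hb
  simpa [mul_comm] using this

lemma aux_sinc_sq (s x u : ℝ) (hs : 0 < s) :
    ‖(Complex.sin ((s:ℂ) * (x + u * I)) / ((s:ℂ) * (x + u * I))) ^ 2‖ ≤
      Real.exp (2 * s * |u|) * (2 / (1 + (s * x) ^ 2)) := by
  set z : ℂ := (s:ℂ) * (x + u * I) with hz
  have him : z.im = s * u := by simp [hz]
  have hre : z.re = s * x := by simp [hz]
  have habs : |z.im| = s * |u| := by rw [him, abs_mul, abs_of_pos hs]
  have hxpos : (0:ℝ) < 1 + (s * x) ^ 2 := by positivity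
  rw [norm_pow]
  rcases le_or_gt (|s * x|) 1 with hcase | hcase
  · -- small x : use |sin z / z| ≤ exp |z.im|
    have h1 : ‖Complex.sin z / z‖ ≤ Real.exp (s * |u|) := by
      rcases eq_or_ne z 0 with h0 | h0
      · simp [h0]; positivity
      · rw [norm_div, div_le_iff₀ (norm_pos_iff.2 h0)]
        calc ‖Complex.sin z‖ ≤ ‖z‖ * Real.exp |z.im| := aux_norm_sin_le_mul z
          _ = Real.exp (s * |u|) * ‖z‖ := by rw [habs, mul_comm]
    have h2 : (1:ℝ) ≤ 2 / (1 + (s * x) ^ 2) := by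
      rw [le_div_iff₀ hxpos]
      have := _root_.sq_abs (s * x)
      nlinarith [abs_nonneg (s*x), sq_nonneg (s*x)]
    calc ‖Complex.sin z / z‖ ^ 2 ≤ (Real.exp (s * |u|)) ^ 2 := by
          gcongr <;> first | exact norm_nonneg _ | skip
      _ = Real.exp (2 * s * |u|) := by
          rw [sq, ← Real.exp_add]; ring_nf
      _ ≤ Real.exp (2 * s * |u|) * (2 / (1 + (s * x) ^ 2)) := by
          nlinarith [Real.exp_pos (2 * s * |u|)]
  · -- large x
    have hsx : (s*x)^2 ≠ 0 := by
      intro h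
      rw [← _root_.sq_abs, pow_eq_zero_iff (two_ne_zero)] at h
      rw [h] at hcase; linarith
    have hz0 : z ≠ 0 := by
      intro h; rw [h] at hre; simp only [Complex.zero_re] at hre
      exact hsx (by rw [← hre]; ring)
    have hzn : |s * x| ≤ ‖z‖ := by rw [← hre]; exact Complex.abs_re_le_norm z
    have h1 : ‖Complex.sin z / z‖ ≤ Real.exp (s * |u|) / |s * x| := by
      rw [norm_div]
      apply div_le_div₀ (Real.exp_pos _).le _ (by linarith) hzn
      rw [← habs]; exact aux_norm_sin z
    have h2 : (1:ℝ) / (s*x)^2 ≤ 2 / (1 + (s * x) ^ 2) := by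
      have h0 : (0:ℝ) < (s*x)^2 := lt_of_le_of_ne (sq_nonneg _) (Ne.symm hsx)
      rw [div_le_div_iff₀ h0 hxpos]
      nlinarith [_root_.sq_abs (s * x)]
    calc ‖Complex.sin z / z‖ ^ 2 ≤ (Real.exp (s * |u|) / |s * x|) ^ 2 := by
          gcongr <;> first | exact norm_nonneg _ | skip
      _ = Real.exp (2 * s * |u|) * (1 / (s * x) ^ 2) := by
          rw [div_pow, sq (Real.exp _), ← Real.exp_add, _root_.sq_abs]; ring_nf
      _ ≤ Real.exp (2 * s * |u|) * (2 / (1 + (s * x) ^ 2)) := by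
          gcongr

lemma aux_integrable_inv (c B : ℝ) (hc : 0 < c) :
    Integrable (fun x : ℝ => B / (1 + (c * x) ^ 2)) := by
  have h : Integrable (fun x : ℝ => (1 + (c * x) ^ 2)⁻¹) := by
    have := (integrable_inv_one_add_sq).comp_mul_left' (ne_of_gt hc)
    simpa using this
  simpa [div_eq_mul_inv] using h.const_mul B

lemma aux_contour_shift (f : ℂ → ℂ) (hf : Differentiable ℂ f) (y B c : ℝ) (hc : 0 < c)
    (hbd : ∀ x u : ℝ, u ∈ Set.uIcc 0 y → ‖f (x + u * I)‖ ≤ B / (1 + (c * x) ^ 2)) :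
    (∫ x : ℝ, f (x + y * I)) = ∫ x : ℝ, f x := by
  have hB : 0 ≤ B := by
    have h := (norm_nonneg (f ((0:ℝ) + (0:ℝ) * I))).trans (hbd 0 0 Set.left_mem_uIcc)
    simpa using h
  -- integrability on horizontal lines in the strip
  have hline : ∀ u : ℝ, u ∈ Set.uIcc 0 y → Integrable (fun x : ℝ => f (x + u * I)) := by
    intro u hu
    refine (aux_integrable_inv c B hc).mono' ?_ (ae_of_all _ fun x => hbd x u hu)
    exact (hf.continuous.comp (by fun_prop)).aestronglyMeasurable
  -- rectangle identity
  have hrect : ∀ R : ℝ,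
      (∫ x in -R..R, f x) - (∫ x in -R..R, f (x + y * I)) +
        I • (∫ u in (0:ℝ)..y, f (R + u * I)) - I • (∫ u in (0:ℝ)..y, f (-R + u * I)) = 0 := by
    intro R
    have h := Complex.integral_boundary_rect_eq_zero_of_differentiableOn f (-(R:ℂ))
      ((R:ℂ) + (y:ℝ) * I) hf.differentiableOn
    simpa using h
  -- vertical side bound
  have hvert : ∀ (g : ℝ → ℝ), (∀ R, |g R| = |R|) →
      Tendsto (fun R : ℝ => ∫ u in (0:ℝ)..y, f (g R + u * I)) atTop (𝓝 0) := by
    intro g hg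
    have hbnd : ∀ R : ℝ, ‖∫ u in (0:ℝ)..y, f (g R + u * I)‖ ≤
        B / (1 + (c * g R) ^ 2) * |y - 0| := by
      intro R
      refine intervalIntegral.norm_integral_le_of_norm_le_const fun u hu => ?_
      exact hbd (g R) u (Set.uIoc_subset_uIcc hu)
    have htend : Tendsto (fun R : ℝ => B / (1 + (c * g R) ^ 2) * |y - 0|) atTop (𝓝 0) := by
      have h1 : Tendsto (fun R : ℝ => 1 + (c * g R) ^ 2) atTop atTop := by
        have h2 : Tendsto (fun R : ℝ => (c * g R) ^ 2) atTop atTop := by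
          have h3 : Tendsto (fun R : ℝ => c * |R|) atTop atTop :=
            (tendsto_abs_atTop_atTop).const_mul_atTop hc
          have h4 : ∀ R, (c * g R) ^ 2 = (c * |R|) ^ 2 := by
            intro R
            rw [mul_pow, mul_pow, ← _root_.sq_abs (g R), hg R, _root_.sq_abs]
          simp_rw [h4]
          exact (tendsto_pow_atTop two_ne_zero).comp h3
        exact tendsto_atTop_add_const_left _ 1 h2
      have := (tendsto_const_nhds.div_atTop h1 : Tendsto (fun R : ℝ => B / (1 + (c * g R) ^ 2)) atTop (𝓝 0))
      simpa using this.mul_const |y - 0|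
    exact squeeze_zero_norm hbnd htend
  have hv1 := hvert (fun R => R) (fun R => rfl)
  have hv2 := hvert (fun R => -R) (fun R => abs_neg R)
  simp only [Complex.ofReal_neg] at hv2
  have ht1 : Tendsto (fun R : ℝ => ∫ x in -R..R, f x) atTop (𝓝 (∫ x : ℝ, f x)) :=
    intervalIntegral_tendsto_integral (by simpa using hline 0 Set.left_mem_uIcc)
      tendsto_neg_atTop_atBot tendsto_id
  have ht2 : Tendsto (fun R : ℝ => ∫ x in -R..R, f (x + y * I)) atTop
      (𝓝 (∫ x : ℝ, f (x + y * I))) :=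
    intervalIntegral_tendsto_integral (hline y Set.right_mem_uIcc)
      tendsto_neg_atTop_atBot tendsto_id
  have key : Tendsto (fun R : ℝ => ∫ x in -R..R, f (x + y * I)) atTop
      (𝓝 ((∫ x : ℝ, f x) + I • (0:ℂ) - I • (0:ℂ))) := by
    have heq : (fun R : ℝ => ∫ x in -R..R, f (x + y * I)) =
        fun R => (∫ x in -R..R, f x) + I • (∫ u in (0:ℝ)..y, f (R + u * I)) -
          I • (∫ u in (0:ℝ)..y, f (-R + u * I)) := by
      funext R
      have h := hrect R
      simp only [smul_eq_mul] at h ⊢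
      linear_combination -h
    rw [heq]
    exact ((ht1.add ((tendsto_const_nhds).smul hv1)).sub ((tendsto_const_nhds).smul hv2))
  have := tendsto_nhds_unique ht2 key
  simpa using this

/-- Paley–Wiener step: for `p` entire of exponential type,
bounded on the upper half-plane and `≤ C e^{σ|Im w|}` on the lower one, the
function `p_ε(w) = p(w)(sin(πεw)/(πεw))²` is entire of exponential type, lies
in `L¹ ∩ L²` on every horizontal line, and its inverse Fourier transform is a
continuous function vanishing outside `(-σ/(2π) - ε, ε)`. -/
theorem stmt15 (p : ℂ → ℂ) (hp : Differentiable ℂ p)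
    (C σ : ℝ) (hC : 0 < C) (hσ : 0 < σ)
    (hupper : ∀ w : ℂ, 0 ≤ w.im → ‖p w‖ ≤ C)
    (hlower : ∀ w : ℂ, w.im ≤ 0 → ‖p w‖ ≤ C * Real.exp (σ * |w.im|))
    (ε : ℝ) (hε : 0 < ε) :
    ∃ q : ℂ → ℂ,
      Differentiable ℂ q ∧
      (∀ w : ℂ, w ≠ 0 → q w =
        p w * (Complex.sin (π * ε * w) / (π * ε * w)) ^ 2) ∧
      (∃ A > (0:ℝ), ∃ τ > (0:ℝ), ∀ w : ℂ, ‖q w‖ ≤ A * Real.exp (τ * ‖w‖)) ∧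
      (∀ y : ℝ, Integrable (fun x : ℝ => q (x + y * Complex.I)) ∧
        MemLp (fun x : ℝ => q (x + y * Complex.I)) 2) ∧
      Continuous (fun t : ℝ => ∫ x : ℝ,
        Complex.exp (2 * π * Complex.I * t * x) * q x) ∧
      (∀ t : ℝ, t ∉ Set.Ioo (-(σ / (2 * π)) - ε) ε →
        (∫ x : ℝ, Complex.exp (2 * π * Complex.I * t * x) * q x) = 0) := by
  have hπ : (0:ℝ) < π := Real.pi_pos
  set s : ℝ := π * ε with hs_def
  have hs : 0 < s := by positivity
  set f : ℂ → ℂ := fun w => p w * (Complex.sin (π * ε * w) / (π * ε * w)) ^ 2 with hf_def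
  -- sinc bound in terms of re/im
  have hsinc : ∀ w : ℂ, ‖(Complex.sin (π * ε * w) / (π * ε * w)) ^ 2‖ ≤
      Real.exp (2 * s * |w.im|) * (2 / (1 + (s * w.re) ^ 2)) := by
    intro w
    have h := aux_sinc_sq s w.re w.im hs
    rw [Complex.re_add_im] at h
    have hcast : ((s:ℝ) : ℂ) = (π : ℂ) * (ε : ℂ) := by push_cast [hs_def]; ring
    rwa [hcast] at h
  -- global bound on p
  have hpg : ∀ w : ℂ, ‖p w‖ ≤ C * Real.exp (σ * |w.im|) := by
    intro w
    rcases le_or_gt 0 w.im with h | h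
    · calc ‖p w‖ ≤ C := hupper w h
        _ ≤ C * Real.exp (σ * |w.im|) := by
          nlinarith [Real.one_le_exp (by positivity : (0:ℝ) ≤ σ * |w.im|)]
    · exact hlower w h.le
  have hfb : ∀ w : ℂ, ‖f w‖ ≤
      C * Real.exp (σ * |w.im|) * (Real.exp (2 * s * |w.im|) * (2 / (1 + (s * w.re) ^ 2))) := by
    intro w
    rw [hf_def, norm_mul]
    exact mul_le_mul (hpg w) (hsinc w) (norm_nonneg _) (by positivity)
  have hfb_up : ∀ w : ℂ, 0 ≤ w.im →
      ‖f w‖ ≤ C * (Real.exp (2 * s * w.im) * (2 / (1 + (s * w.re) ^ 2))) := by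
    intro w hw
    rw [hf_def, norm_mul]
    have := hsinc w
    rw [_root_.abs_of_nonneg hw] at this
    exact mul_le_mul (hupper w hw) this (norm_nonneg _) hC.le
  -- differentiability away from 0
  have hfd : ∀ w : ℂ, w ≠ 0 → DifferentiableAt ℂ f w := by
    intro w hw
    have hne : (π : ℂ) * ε * w ≠ 0 := by
      simp [Real.pi_ne_zero, hε.ne', hw]
    apply (hp w).mul
    apply DifferentiableAt.pow
    apply DifferentiableAt.div
    · exact (Complex.differentiable_sin _).comp w ((differentiableAt_id.const_mul _))
    · exact differentiableAt_id.const_mul _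
    · exact hne
  -- limit at 0
  have hlim : Tendsto f (𝓝[≠] (0:ℂ)) (𝓝 (p 0)) := by
    have h1 : Tendsto (fun z : ℂ => Complex.sin z / z) (𝓝[≠] (0:ℂ)) (𝓝 1) := by
      have h := hasDerivAt_iff_tendsto_slope.mp (Complex.hasDerivAt_sin 0)
      rw [Complex.cos_zero] at h
      refine h.congr fun z => ?_
      simp [slope_def_field, Complex.sin_zero]
    have h2 : Tendsto (fun w : ℂ => (π : ℂ) * ε * w) (𝓝[≠] (0:ℂ)) (𝓝[≠] (0:ℂ)) := by
      rw [tendsto_nhdsWithin_iff]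
      constructor
      · have : Tendsto (fun w : ℂ => (π : ℂ) * ε * w) (𝓝 0) (𝓝 ((π : ℂ) * ε * 0)) :=
          (continuous_const.mul continuous_id).tendsto 0
        simpa using this.mono_left nhdsWithin_le_nhds
      · filter_upwards [self_mem_nhdsWithin] with w hw
        simp only [Set.mem_compl_iff, Set.mem_singleton_iff] at hw ⊢
        simp [Real.pi_ne_zero, hε.ne', hw]
    have h3 : Tendsto (fun w : ℂ => (Complex.sin (π * ε * w) / (π * ε * w)) ^ 2)
        (𝓝[≠] (0:ℂ)) (𝓝 1) := by
      have := (h1.comp h2).pow 2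
      simpa using this
    have h4 : Tendsto p (𝓝[≠] (0:ℂ)) (𝓝 (p 0)) :=
      (hp.continuous.tendsto 0).mono_left nhdsWithin_le_nhds
    have := h4.mul h3
    simpa using this
  have hlu : limUnder (𝓝[≠] (0:ℂ)) f = p 0 := hlim.limUnder_eq
  set q : ℂ → ℂ := Function.update f 0 (p 0) with hq_def
  have hq_eq : ∀ w : ℂ, w ≠ 0 → q w = f w := fun w hw => Function.update_of_ne hw _ _
  have hq0 : q 0 = p 0 := Function.update_self _ _ _
  -- differentiability of q
  have h2le : ∀ x : ℝ, 2 / (1 + (s * x) ^ 2) ≤ 2 := by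
    intro x
    rw [div_le_iff₀ (by positivity)]
    nlinarith [sq_nonneg (s * x)]
  have hqd : Differentiable ℂ q := by
    intro w
    rcases eq_or_ne w 0 with rfl | hw
    · have hball : Metric.ball (0:ℂ) 1 ∈ 𝓝 (0:ℂ) := Metric.ball_mem_nhds _ one_pos
      have hdiff : DifferentiableOn ℂ f (Metric.ball (0:ℂ) 1 \ {0}) := fun z hz =>
        (hfd z hz.2).differentiableWithinAt
      have hbdd : BddAbove ((norm ∘ f) '' (Metric.ball (0:ℂ) 1 \ {0})) := by
        refine ⟨C * Real.exp (σ * 1) * (Real.exp (2 * s * 1) * 2), ?_⟩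
        rintro r ⟨z, hz, rfl⟩
        have hzn : ‖z‖ < 1 := by simpa [Metric.mem_ball] using hz.1
        have him : |z.im| ≤ 1 := (Complex.abs_im_le_norm z).trans hzn.le
        calc (norm ∘ f) z ≤
            C * Real.exp (σ * |z.im|) * (Real.exp (2 * s * |z.im|) * (2 / (1 + (s * z.re) ^ 2))) :=
              hfb z
          _ ≤ C * Real.exp (σ * 1) * (Real.exp (2 * s * 1) * 2) := by
              gcongr <;> first | exact hC.le | exact him | exact h2le _ | positivity
      have hres := Complex.differentiableOn_update_limUnder_of_bddAbove hball hdiff hbdd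
      rw [hlu] at hres
      exact (hres 0 (Metric.mem_ball_self one_pos)).differentiableAt
        (Metric.isOpen_ball.mem_nhds (Metric.mem_ball_self one_pos))
    · have hev : q =ᶠ[𝓝 w] f := by
        filter_upwards [isOpen_compl_singleton.mem_nhds hw] with z hz
        exact Function.update_of_ne hz _ _
      exact ((hfd w hw).congr_of_eventuallyEq hev)
  -- bounds on q
  have hqb_all : ∀ w : ℂ, ‖q w‖ ≤
      C * Real.exp (σ * |w.im|) * (Real.exp (2 * s * |w.im|) * (2 / (1 + (s * w.re) ^ 2))) := by
    intro w
    rcases eq_or_ne w 0 with rfl | hw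
    · rw [hq0]
      have h := hupper 0 (by simp)
      simp only [Complex.zero_im, Complex.zero_re, abs_zero, mul_zero, Real.exp_zero,
        mul_zero, zero_pow, mul_one]
      norm_num
      nlinarith [h]
    · rw [hq_eq w hw]; exact hfb w
  have hqb_up : ∀ w : ℂ, 0 ≤ w.im →
      ‖q w‖ ≤ C * (Real.exp (2 * s * w.im) * (2 / (1 + (s * w.re) ^ 2))) := by
    intro w hw
    rcases eq_or_ne w 0 with rfl | hw0
    · rw [hq0]
      have h := hupper 0 (by simp)
      simp only [Complex.zero_im, Complex.zero_re, mul_zero, Real.exp_zero, zero_pow]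
      norm_num
      nlinarith [h]
    · rw [hq_eq w hw0]; exact hfb_up w hw
  have hqc : Continuous q := hqd.continuous
  have hline_b : ∀ y x : ℝ, ‖q (↑x + ↑y * I)‖ ≤
      (C * Real.exp (σ * |y|) * Real.exp (2 * s * |y|) * 2) / (1 + (s * x) ^ 2) := by
    intro y x
    have him : ((x:ℂ) + (y:ℝ) * I).im = y := by simp
    have hre : ((x:ℂ) + (y:ℝ) * I).re = x := by simp
    have h := hqb_all ((x:ℂ) + (y:ℝ) * I)
    rw [him, hre] at h
    calc ‖q ((x:ℂ) + (y:ℝ) * I)‖ ≤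
        C * Real.exp (σ * |y|) * (Real.exp (2 * s * |y|) * (2 / (1 + (s * x) ^ 2))) := h
      _ = (C * Real.exp (σ * |y|) * Real.exp (2 * s * |y|) * 2) / (1 + (s * x) ^ 2) := by
          ring
  have hIcont : Continuous (fun t : ℝ => ∫ x : ℝ, Complex.exp (2 * ↑π * I * ↑t * ↑x) * q ↑x) := by
    have hexp_norm : ∀ t x : ℝ, ‖Complex.exp (2 * ↑π * I * ↑t * ↑x)‖ = 1 := by
      intro t x
      have h : (2 * (π:ℂ) * I * t * x) = ((2 * π * t * x : ℝ) : ℂ) * I := by push_cast; ring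
      rw [h, aux_norm_exp]
      simp
    have hcoe : ∀ x : ℝ, ((x:ℂ)) = ↑x + ↑(0:ℝ) * I := by intro x; simp
    have hbd0 : ∀ x : ℝ, ‖q ↑x‖ ≤
        (C * Real.exp (σ * |(0:ℝ)|) * Real.exp (2 * s * |(0:ℝ)|) * 2) / (1 + (s * x) ^ 2) := by
      intro x
      rw [hcoe x]
      exact hline_b 0 x
    refine continuous_of_dominated (F := fun (t : ℝ) (x : ℝ) =>
        Complex.exp (2 * ↑π * I * ↑t * ↑x) * q ↑x)
      (bound := fun x : ℝ => (C * Real.exp (σ * |(0:ℝ)|) * Real.exp (2 * s * |(0:ℝ)|) * 2) /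
        (1 + (s * x) ^ 2)) ?_ ?_ ?_ ?_
    · intro t
      apply Continuous.aestronglyMeasurable
      fun_prop
    · intro t
      refine ae_of_all _ fun x => ?_
      rw [norm_mul, hexp_norm t x, one_mul]
      exact hbd0 x
    · exact aux_integrable_inv s _ hs
    · refine ae_of_all _ fun x => ?_
      fun_prop
  refine ⟨q, hqd, fun w hw => hq_eq w hw, ?_, ?_, ?_, ?_⟩
  · -- exponential type
    refine ⟨2 * C, by linarith, σ + 2 * s, by positivity, fun w => ?_⟩
    have h1 := hqb_all w
    have him : |w.im| ≤ ‖w‖ := Complex.abs_im_le_norm w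
    calc ‖q w‖ ≤ C * Real.exp (σ * |w.im|) *
          (Real.exp (2 * s * |w.im|) * (2 / (1 + (s * w.re) ^ 2))) := h1
      _ ≤ C * Real.exp (σ * ‖w‖) * (Real.exp (2 * s * ‖w‖) * 2) := by
          gcongr <;> first | exact hC.le | exact him | exact h2le _ | positivity
      _ = 2 * C * (Real.exp (σ * ‖w‖) * Real.exp (2 * s * ‖w‖)) := by ring
      _ = 2 * C * Real.exp ((σ + 2 * s) * ‖w‖) := by
          rw [← Real.exp_add]; ring_nf
  · -- L¹ and L² on horizontal lines
    intro y
    have hmeas : AEStronglyMeasurable (fun x : ℝ => q (↑x + ↑y * I)) volume :=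
      (hqc.comp (by fun_prop)).aestronglyMeasurable
    constructor
    · exact (aux_integrable_inv s _ hs).mono' hmeas (ae_of_all _ fun x => hline_b y x)
    · rw [memLp_two_iff_integrable_sq_norm hmeas]
      set K := C * Real.exp (σ * |y|) * Real.exp (2 * s * |y|) * 2 with hK_def
      have hK : 0 ≤ K := by positivity
      refine (aux_integrable_inv s (K ^ 2) hs).mono'
        (((hqc.comp (by fun_prop)).norm.pow 2).aestronglyMeasurable) (ae_of_all _ fun x => ?_)
      have h1 : ‖q (↑x + ↑y * I)‖ ^ 2 ≤ (K / (1 + (s * x) ^ 2)) ^ 2 :=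
        pow_le_pow_left₀ (norm_nonneg _) (hline_b y x) 2
      have h2 : (K / (1 + (s * x) ^ 2)) ^ 2 ≤ K ^ 2 / (1 + (s * x) ^ 2) := by
        rw [div_pow]
        gcongr <;> nlinarith [sq_nonneg (s * x)]
      calc ‖‖q (↑x + ↑y * I)‖ ^ 2‖ = ‖q (↑x + ↑y * I)‖ ^ 2 := by
            rw [Real.norm_eq_abs, _root_.abs_of_nonneg (by positivity)]
        _ ≤ K ^ 2 / (1 + (s * x) ^ 2) := h1.trans h2
  · exact hIcont
  · -- vanishing
    intro t0 ht0
    have hexp_re : ∀ t x u : ℝ, (2 * (π:ℂ) * I * t * (↑x + ↑u * I)).re = -(2 * π * t * u) := by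
      intro t x u
      have h : (2 * (π:ℂ) * I * t * (↑x + ↑u * I)) =
          ((-(2 * π * t * u) : ℝ) : ℂ) + ((2 * π * t * x : ℝ) : ℂ) * I := by
        push_cast
        linear_combination (2 * (π:ℂ) * t * u) * Complex.I_sq
      rw [h]
      simp
    set J : ℝ := ∫ x : ℝ, (2 * C) / (1 + (s * x) ^ 2) with hJ_def
    have main_up : ∀ t : ℝ, ε < t → (∫ x : ℝ, Complex.exp (2 * ↑π * I * ↑t * ↑x) * q ↑x) = 0 := by
      intro t ht
      set F : ℂ → ℂ := fun w => Complex.exp (2 * ↑π * I * ↑t * w) * q w with hF_def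
      have hFd : Differentiable ℂ F :=
        (Complex.differentiable_exp.comp (differentiable_id.const_mul _)).mul hqd
      have hFnorm : ∀ x u : ℝ, ‖F (↑x + ↑u * I)‖ =
          Real.exp (-(2 * π * t * u)) * ‖q (↑x + ↑u * I)‖ := by
        intro x u
        rw [hF_def]
        dsimp only
        rw [norm_mul, aux_norm_exp, hexp_re]
      have hqline : ∀ x u : ℝ, 0 ≤ u → ‖q (↑x + ↑u * I)‖ ≤
          C * (Real.exp (2 * s * u) * (2 / (1 + (s * x) ^ 2))) := by
        intro x u hu
        have him : ((x:ℂ) + (u:ℝ) * I).im = u := by simp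
        have hre : ((x:ℂ) + (u:ℝ) * I).re = x := by simp
        have h := hqb_up ((x:ℂ) + (u:ℝ) * I) (by rw [him]; exact hu)
        rwa [him, hre] at h
      have hstrip : ∀ y : ℝ, 0 < y → ∀ x u : ℝ, u ∈ Set.uIcc 0 y →
          ‖F (↑x + ↑u * I)‖ ≤ (2 * C) / (1 + (s * x) ^ 2) := by
        intro y hy x u hu
        rw [Set.uIcc_of_le hy.le] at hu
        obtain ⟨hu0, huy⟩ := hu
        rw [hFnorm x u]
        have hexp1 : Real.exp (-(2 * π * t * u)) * Real.exp (2 * s * u) ≤ 1 := by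
          rw [← Real.exp_add]
          rw [Real.exp_le_one_iff]
          have hss : s = π * ε := hs_def
          nlinarith [mul_nonneg hu0 (mul_pos hπ (sub_pos.2 ht)).le]
        calc Real.exp (-(2 * π * t * u)) * ‖q (↑x + ↑u * I)‖
            ≤ Real.exp (-(2 * π * t * u)) * (C * (Real.exp (2 * s * u) * (2 / (1 + (s * x) ^ 2)))) :=
              mul_le_mul_of_nonneg_left (hqline x u hu0) (Real.exp_pos _).le
          _ = (Real.exp (-(2 * π * t * u)) * Real.exp (2 * s * u)) * (C * (2 / (1 + (s * x) ^ 2))) := by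
              ring
          _ ≤ 1 * (C * (2 / (1 + (s * x) ^ 2))) :=
              mul_le_mul_of_nonneg_right hexp1 (by positivity)
          _ = (2 * C) / (1 + (s * x) ^ 2) := by ring
      have hbound : ∀ y : ℝ, 0 < y →
          ‖∫ x : ℝ, F ↑x‖ ≤ Real.exp ((2 * s - 2 * π * t) * y) * J := by
        intro y hy
        rw [← aux_contour_shift F hFd y (2 * C) s hs (hstrip y hy)]
        have hint : Integrable (fun x : ℝ => Real.exp ((2 * s - 2 * π * t) * y) *
            ((2 * C) / (1 + (s * x) ^ 2))) := (aux_integrable_inv s (2 * C) hs).const_mul _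
        have hexp2 : Real.exp (-(2 * π * t * y)) * Real.exp (2 * s * y) =
            Real.exp ((2 * s - 2 * π * t) * y) := by
          rw [← Real.exp_add]; ring_nf
        have hptw : ∀ x : ℝ, ‖F (↑x + ↑y * I)‖ ≤
            Real.exp ((2 * s - 2 * π * t) * y) * ((2 * C) / (1 + (s * x) ^ 2)) := by
          intro x
          rw [hFnorm x y]
          calc Real.exp (-(2 * π * t * y)) * ‖q (↑x + ↑y * I)‖
              ≤ Real.exp (-(2 * π * t * y)) * (C * (Real.exp (2 * s * y) * (2 / (1 + (s * x) ^ 2)))) :=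
                mul_le_mul_of_nonneg_left (hqline x y hy.le) (Real.exp_pos _).le
            _ = (Real.exp (-(2 * π * t * y)) * Real.exp (2 * s * y)) * ((2 * C) / (1 + (s * x) ^ 2)) := by
                ring
            _ = Real.exp ((2 * s - 2 * π * t) * y) * ((2 * C) / (1 + (s * x) ^ 2)) := by
                rw [hexp2]
        calc ‖∫ x : ℝ, F (↑x + ↑y * I)‖
            ≤ ∫ x : ℝ, Real.exp ((2 * s - 2 * π * t) * y) * ((2 * C) / (1 + (s * x) ^ 2)) :=
              norm_integral_le_of_norm_le hint (ae_of_all _ hptw)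
          _ = Real.exp ((2 * s - 2 * π * t) * y) * J := by
              rw [hJ_def, MeasureTheory.integral_const_mul]
      have htend : Tendsto (fun y : ℝ => Real.exp ((2 * s - 2 * π * t) * y) * J) atTop (𝓝 0) := by
        have hneg : 2 * s - 2 * π * t < 0 := by
          have : s = π * ε := hs_def
          nlinarith
        have h1 : Tendsto (fun y : ℝ => (2 * s - 2 * π * t) * y) atTop atBot :=
          (tendsto_const_mul_atBot_of_neg hneg).2 tendsto_id
        have h2 := (Real.tendsto_exp_atBot.comp h1).mul_const J
        simpa using h2
      have hle : ‖∫ x : ℝ, F ↑x‖ ≤ 0 := by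
        refine ge_of_tendsto htend ?_
        filter_upwards [eventually_gt_atTop 0] with y hy using hbound y hy
      exact norm_le_zero_iff.1 hle
    have main_down : ∀ t : ℝ, t < -(σ / (2 * π)) - ε →
        (∫ x : ℝ, Complex.exp (2 * ↑π * I * ↑t * ↑x) * q ↑x) = 0 := by
      intro t ht
      have ha : 2 * π * t + σ + 2 * s < 0 := by
        have h1 : σ / (2 * π) * (2 * π) = σ := div_mul_cancel₀ σ (by positivity)
        have : s = π * ε := hs_def
        nlinarith
      set F : ℂ → ℂ := fun w => Complex.exp (2 * ↑π * I * ↑t * w) * q w with hF_def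
      have hFd : Differentiable ℂ F :=
        (Complex.differentiable_exp.comp (differentiable_id.const_mul _)).mul hqd
      have hFnorm : ∀ x u : ℝ, ‖F (↑x + ↑u * I)‖ =
          Real.exp (-(2 * π * t * u)) * ‖q (↑x + ↑u * I)‖ := by
        intro x u
        rw [hF_def]
        dsimp only
        rw [norm_mul, aux_norm_exp, hexp_re]
      have hqline : ∀ x u : ℝ, u ≤ 0 → ‖q (↑x + ↑u * I)‖ ≤
          C * (Real.exp ((σ + 2 * s) * (-u)) * (2 / (1 + (s * x) ^ 2))) := by
        intro x u hu
        have him : ((x:ℂ) + (u:ℝ) * I).im = u := by simp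
        have hre : ((x:ℂ) + (u:ℝ) * I).re = x := by simp
        have h := hqb_all ((x:ℂ) + (u:ℝ) * I)
        rw [him, hre, abs_of_nonpos hu] at h
        calc ‖q (↑x + ↑u * I)‖
            ≤ C * Real.exp (σ * (-u)) * (Real.exp (2 * s * (-u)) * (2 / (1 + (s * x) ^ 2))) := h
          _ = C * ((Real.exp (σ * (-u)) * Real.exp (2 * s * (-u))) * (2 / (1 + (s * x) ^ 2))) := by
              ring
          _ = C * (Real.exp ((σ + 2 * s) * (-u)) * (2 / (1 + (s * x) ^ 2))) := by
              rw [← Real.exp_add]; ring_nf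
      have hFkey : ∀ x u : ℝ, u ≤ 0 → ‖F (↑x + ↑u * I)‖ ≤
          Real.exp (-(2 * π * t + σ + 2 * s) * u) * ((2 * C) / (1 + (s * x) ^ 2)) := by
        intro x u hu
        rw [hFnorm x u]
        calc Real.exp (-(2 * π * t * u)) * ‖q (↑x + ↑u * I)‖
            ≤ Real.exp (-(2 * π * t * u)) *
              (C * (Real.exp ((σ + 2 * s) * (-u)) * (2 / (1 + (s * x) ^ 2)))) :=
              mul_le_mul_of_nonneg_left (hqline x u hu) (Real.exp_pos _).le
          _ = (Real.exp (-(2 * π * t * u)) * Real.exp ((σ + 2 * s) * (-u))) *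
              ((2 * C) / (1 + (s * x) ^ 2)) := by ring
          _ = Real.exp (-(2 * π * t + σ + 2 * s) * u) * ((2 * C) / (1 + (s * x) ^ 2)) := by
              rw [← Real.exp_add]; ring_nf
      have hstrip : ∀ v : ℝ, 0 < v → ∀ x u : ℝ, u ∈ Set.uIcc 0 (-v) →
          ‖F (↑x + ↑u * I)‖ ≤ (2 * C) / (1 + (s * x) ^ 2) := by
        intro v hv x u hu
        rw [Set.uIcc_of_ge (by linarith : -v ≤ (0:ℝ))] at hu
        obtain ⟨huv, hu0⟩ := hu
        have h1 := hFkey x u hu0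
        have h2 : Real.exp (-(2 * π * t + σ + 2 * s) * u) ≤ 1 := by
          rw [Real.exp_le_one_iff]
          nlinarith
        calc ‖F (↑x + ↑u * I)‖
            ≤ Real.exp (-(2 * π * t + σ + 2 * s) * u) * ((2 * C) / (1 + (s * x) ^ 2)) := h1
          _ ≤ 1 * ((2 * C) / (1 + (s * x) ^ 2)) :=
              mul_le_mul_of_nonneg_right h2 (by positivity)
          _ = (2 * C) / (1 + (s * x) ^ 2) := one_mul _
      have hbound : ∀ v : ℝ, 0 < v →
          ‖∫ x : ℝ, F ↑x‖ ≤ Real.exp ((2 * π * t + σ + 2 * s) * v) * J := by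
        intro v hv
        rw [← aux_contour_shift F hFd (-v) (2 * C) s hs (hstrip v hv)]
        have hint : Integrable (fun x : ℝ => Real.exp ((2 * π * t + σ + 2 * s) * v) *
            ((2 * C) / (1 + (s * x) ^ 2))) := (aux_integrable_inv s (2 * C) hs).const_mul _
        have hptw : ∀ x : ℝ, ‖F (↑x + ↑(-v) * I)‖ ≤
            Real.exp ((2 * π * t + σ + 2 * s) * v) * ((2 * C) / (1 + (s * x) ^ 2)) := by
          intro x
          have h1 := hFkey x (-v) (by linarith)
          have h2 : -(2 * π * t + σ + 2 * s) * (-v) = (2 * π * t + σ + 2 * s) * v := by ring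
          rwa [h2] at h1
        calc ‖∫ x : ℝ, F (↑x + ↑(-v) * I)‖
            ≤ ∫ x : ℝ, Real.exp ((2 * π * t + σ + 2 * s) * v) * ((2 * C) / (1 + (s * x) ^ 2)) :=
              norm_integral_le_of_norm_le hint (ae_of_all _ hptw)
          _ = Real.exp ((2 * π * t + σ + 2 * s) * v) * J := by
              rw [hJ_def, MeasureTheory.integral_const_mul]
      have htend : Tendsto (fun v : ℝ => Real.exp ((2 * π * t + σ + 2 * s) * v) * J)
          atTop (𝓝 0) := by
        have h1 : Tendsto (fun v : ℝ => (2 * π * t + σ + 2 * s) * v) atTop atBot :=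
          (tendsto_const_mul_atBot_of_neg ha).2 tendsto_id
        have h2 := (Real.tendsto_exp_atBot.comp h1).mul_const J
        simpa using h2
      have hle : ‖∫ x : ℝ, F ↑x‖ ≤ 0 := by
        refine ge_of_tendsto htend ?_
        filter_upwards [eventually_gt_atTop 0] with v hv using hbound v hv
      exact norm_le_zero_iff.1 hle
    -- endpoints via continuity
    simp only [Set.mem_Ioo, not_and_or, not_lt] at ht0
    rcases ht0 with h | h
    · rcases lt_or_eq_of_le h with hlt | heq
      · exact main_down t0 hlt
      · have h1 : Tendsto (fun t : ℝ => ∫ x : ℝ, Complex.exp (2 * ↑π * I * ↑t * ↑x) * q ↑x)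
            (𝓝[<] t0) (𝓝 (∫ x : ℝ, Complex.exp (2 * ↑π * I * ↑t0 * ↑x) * q ↑x)) :=
          (hIcont.tendsto t0).mono_left nhdsWithin_le_nhds
        have h2 : Tendsto (fun t : ℝ => ∫ x : ℝ, Complex.exp (2 * ↑π * I * ↑t * ↑x) * q ↑x)
            (𝓝[<] t0) (𝓝 0) := by
          refine Tendsto.congr' ?_ tendsto_const_nhds
          filter_upwards [self_mem_nhdsWithin] with u hu
          rw [Set.mem_Iio, heq] at hu
          exact (main_down u hu).symm
        exact tendsto_nhds_unique h1 h2
    · rcases lt_or_eq_of_le h with hlt | heq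
      · exact main_up t0 hlt
      · have h1 : Tendsto (fun t : ℝ => ∫ x : ℝ, Complex.exp (2 * ↑π * I * ↑t * ↑x) * q ↑x)
            (𝓝[>] t0) (𝓝 (∫ x : ℝ, Complex.exp (2 * ↑π * I * ↑t0 * ↑x) * q ↑x)) :=
          (hIcont.tendsto t0).mono_left nhdsWithin_le_nhds
        have h2 : Tendsto (fun t : ℝ => ∫ x : ℝ, Complex.exp (2 * ↑π * I * ↑t * ↑x) * q ↑x)
            (𝓝[>] t0) (𝓝 0) := by
          refine Tendsto.congr' ?_ tendsto_const_nhds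
          filter_upwards [self_mem_nhdsWithin] with u hu
          rw [Set.mem_Ioi, ← heq] at hu
          exact (main_up u hu).symm
        exact tendsto_nhds_unique h1 h2
end

section
/- Let U ⊂ (−∞, 0] be a locally finite set, b_u ∈ ℂ, and suppose p is an entire function of exponential type σ, bounded on the upper half-plane, such that p(w) = ∑_{u∈U} b_u e^{−2πiuw} (absolutely convergent) for all w with Im w > 0, and such that the inverse Fourier transform of p_ε(w) = p(w)(sin(πεw)/(πεw))² vanishes outside (−σ−ε, ε) for every small ε > 0. Then b_u = 0 for every u ∈ U with u < −σ; consequently p is an exponential polynomial p(w) = ∑_{k=1}^n b_k e^{iγ_k w} with finitely many real frequencies γ_k ≥ 0. -/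
open MeasureTheory Set Complex
open scoped Real
open scoped FourierTransform
open intervalIntegral

set_option maxHeartbeats 1000000 in
noncomputable def auxS (ε x : ℝ) : ℂ := (Complex.sin (π * ε * x) / (π * ε * x)) ^ 2

lemma auxS_norm_le (ε : ℝ) (hε : 0 < ε) (x : ℝ) :
    ‖auxS ε x‖ ≤ max 2 (2 / (π * ε) ^ 2) * (1 + x ^ 2)⁻¹ := by
  have hπε : 0 < π * ε := mul_pos Real.pi_pos hε
  rcases eq_or_ne x 0 with rfl | hx
  · simp [auxS]
  · set y : ℝ := π * ε * x with hy_def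
    have h1 : auxS ε x = (((Real.sin y / y : ℝ) : ℂ)) ^ 2 := by
      simp [auxS, hy_def]
    rw [h1]
    have h2 : ‖(((Real.sin y / y : ℝ) : ℂ)) ^ 2‖ = (Real.sin y / y) ^ 2 := by
      rw [norm_pow, Complex.norm_real, Real.norm_eq_abs, _root_.sq_abs]
    rw [h2]
    have hsin1 : |Real.sin y| ≤ 1 := abs_le.2 ⟨Real.neg_one_le_sin y, Real.sin_le_one y⟩
    have hsin2 : |Real.sin y| ≤ |y| := Real.abs_sin_le_abs
    have hyne : y ≠ 0 := mul_ne_zero (ne_of_gt hπε) hx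
    have hsq : (Real.sin y / y) ^ 2 = (Real.sin y)^2 / y^2 := by rw [div_pow]
    rcases le_total (x^2) 1 with hx1 | hx1
    · have : (Real.sin y / y)^2 ≤ 1 := by
        rw [hsq]
        apply div_le_one_of_le₀
        · rw [← _root_.sq_abs (Real.sin y), ← _root_.sq_abs y]
          exact pow_le_pow_left₀ (abs_nonneg _) hsin2 2
        · positivity
      calc (Real.sin y / y)^2 ≤ 1 := this
        _ ≤ 2 * (1 + x^2)⁻¹ := by
            rw [show (2:ℝ) * (1+x^2)⁻¹ = 2 / (1+x^2) by ring, le_div_iff₀ (by positivity)]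
            nlinarith
        _ ≤ max 2 (2 / (π * ε) ^ 2) * (1 + x ^ 2)⁻¹ := by
            gcongr; exact le_max_left _ _
    · have : (Real.sin y / y)^2 ≤ 1 / y^2 := by
        rw [hsq]
        have h01 : Real.sin y ^ 2 ≤ 1 := by
          rw [← _root_.sq_abs (Real.sin y)]
          calc |Real.sin y|^2 ≤ 1^2 := pow_le_pow_left₀ (abs_nonneg _) hsin1 2
            _ = 1 := one_pow 2
        gcongr
      calc (Real.sin y / y)^2 ≤ 1 / y^2 := this
        _ = 1 / ((π*ε)^2 * x^2) := by rw [hy_def]; ring_nf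
        _ ≤ (2 / (π*ε)^2) * (1 + x^2)⁻¹ := by
            rw [show (2/(π*ε)^2) * (1+x^2)⁻¹ = 2 / ((π*ε)^2 * (1+x^2)) by field_simp,
              div_le_div_iff₀ (by positivity) (by positivity)]
            nlinarith [mul_le_mul_of_nonneg_left hx1 (sq_nonneg (π*ε))]
        _ ≤ max 2 (2 / (π * ε) ^ 2) * (1 + x ^ 2)⁻¹ := by
            gcongr; exact le_max_right _ _

lemma auxS_meas (ε : ℝ) : Measurable (auxS ε) := by
  unfold auxS
  fun_prop

lemma auxS_integrable (ε : ℝ) (hε : 0 < ε) : Integrable (auxS ε) := by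
  refine Integrable.mono' ((integrable_inv_one_add_sq).const_mul (max 2 (2 / (π * ε) ^ 2)))
    (auxS_meas ε).aestronglyMeasurable (ae_of_all _ fun x => ?_)
  exact auxS_norm_le ε hε x

noncomputable def auxT (ε ξ : ℝ) : ℂ := ((max 0 (ε - |ξ|)) / ε ^ 2 : ℝ)

lemma auxT_cont (ε : ℝ) : Continuous (auxT ε) := by
  unfold auxT; fun_prop

lemma auxT_eq_zero (ε ξ : ℝ) (h : ε ≤ |ξ|) : auxT ε ξ = 0 := by
  unfold auxT
  rw [max_eq_left (by linarith)]
  simp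

lemma auxT_support (ε : ℝ) : Function.support (auxT ε) ⊆ Ioc (-ε) ε := by
  intro ξ hξ
  by_contra h
  apply hξ
  apply auxT_eq_zero
  rcases abs_cases ξ with ⟨h1, _⟩ | ⟨h1, _⟩ <;>
    simp only [mem_Ioc, not_and_or, not_lt, not_le] at h <;> rcases h with h | h <;> linarith

lemma auxT_integrable (ε : ℝ) (hε : 0 < ε) : Integrable (auxT ε) := by
  refine (auxT_cont ε).integrable_of_hasCompactSupport ?_
  apply HasCompactSupport.intro (K := Icc (-ε) ε) isCompact_Icc
  intro ξ hξ
  apply auxT_eq_zero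
  simp only [mem_Icc, not_and_or, not_le] at hξ
  rcases abs_cases ξ with ⟨h1, _⟩ | ⟨h1, _⟩ <;> rcases hξ with h | h <;> linarith

lemma exp_hasDerivAt (c : ℂ) (ξ : ℝ) :
    HasDerivAt (fun ξ : ℝ => Complex.exp (c * ξ)) (c * Complex.exp (c * ξ)) ξ := by
  have h : HasDerivAt (fun z : ℂ => Complex.exp (c * z)) (c * Complex.exp (c * ξ)) (ξ : ℂ) := by
    simpa [mul_comm, Function.comp_def] using ((Complex.hasDerivAt_exp (c * ξ)).comp (ξ : ℂ)
      ((hasDerivAt_id (ξ : ℂ)).const_mul c))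
  exact h.comp_ofReal

lemma aux_int_exp (εr : ℝ) (c : ℂ) (hc : c ≠ 0) :
    (∫ ξ in (0:ℝ)..εr, ((εr : ℂ) - ξ) * Complex.exp (c * ξ))
      = (Complex.exp (c * εr) - 1) / c ^ 2 - εr / c := by
  have key : ∀ ξ ∈ uIcc (0:ℝ) εr, HasDerivAt
      (fun ξ : ℝ => ((εr : ℂ) - ξ) * Complex.exp (c * ξ) / c + Complex.exp (c * ξ) / c ^ 2)
      (((εr : ℂ) - ξ) * Complex.exp (c * ξ)) ξ := by
    intro ξ _
    have hlin : HasDerivAt (fun ξ : ℝ => ((εr : ℂ) - ξ)) (-1) ξ := by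
      simpa using (Complex.ofRealCLM.hasDerivAt (x := ξ)).const_sub (εr : ℂ)
    have h := ((hlin.mul (exp_hasDerivAt c ξ)).div_const c).add
      ((exp_hasDerivAt c ξ).div_const (c ^ 2))
    refine h.congr_deriv ?_
    field_simp
    ring
  rw [intervalIntegral.integral_eq_sub_of_hasDerivAt key (Continuous.intervalIntegrable (by fun_prop) _ _)]
  simp only [Complex.ofReal_zero, mul_zero, Complex.exp_zero]
  field_simp
  ring

lemma aux_int_exp' (εr : ℝ) (c : ℂ) (hc : c ≠ 0) :
    (∫ ξ in (-εr:ℝ)..0, ((εr : ℂ) + ξ) * Complex.exp (c * ξ))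
      = εr / c + (Complex.exp (-(c * εr)) - 1) / c ^ 2 := by
  have key : ∀ ξ ∈ uIcc (-εr) (0:ℝ), HasDerivAt
      (fun ξ : ℝ => ((εr : ℂ) + ξ) * Complex.exp (c * ξ) / c - Complex.exp (c * ξ) / c ^ 2)
      (((εr : ℂ) + ξ) * Complex.exp (c * ξ)) ξ := by
    intro ξ _
    have hlin : HasDerivAt (fun ξ : ℝ => ((εr : ℂ) + ξ)) 1 ξ := by
      simpa using (Complex.ofRealCLM.hasDerivAt (x := ξ)).const_add (εr : ℂ)
    have h := ((hlin.mul (exp_hasDerivAt c ξ)).div_const c).sub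
      ((exp_hasDerivAt c ξ).div_const (c ^ 2))
    refine h.congr_deriv ?_
    field_simp
    ring
  rw [intervalIntegral.integral_eq_sub_of_hasDerivAt key (Continuous.intervalIntegrable (by fun_prop) _ _)]
  simp only [Complex.ofReal_zero, mul_zero, Complex.exp_zero, add_zero, Complex.ofReal_neg]
  rw [show c * -(εr:ℂ) = -(c * (εr:ℂ)) by ring]
  field_simp
  ring

lemma fourier_eq (f : ℝ → ℂ) (w : ℝ) :
    𝓕 f w = ∫ v : ℝ, Complex.exp (((-2 * π * v * w : ℝ) : ℂ) * Complex.I) * f v := by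
  rw [Real.fourier_eq']
  simp only [RCLike.inner_apply, conj_trivial, smul_eq_mul]
  congr 1; funext v; congr 1; push_cast; ring

lemma fourierInv_eq (f : ℝ → ℂ) (w : ℝ) :
    𝓕⁻ f w = ∫ v : ℝ, Complex.exp (((2 * π * v * w : ℝ) : ℂ) * Complex.I) * f v := by
  rw [Real.fourierInv_eq']
  simp only [RCLike.inner_apply, conj_trivial, smul_eq_mul]
  congr 1; funext v; congr 1; push_cast; ring

lemma exp_add_exp_neg (w : ℂ) : Complex.exp (w * I) + Complex.exp (-w * I) = 2 * Complex.cos w := by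
  rw [Complex.exp_mul_I, Complex.exp_mul_I, Complex.cos_neg, Complex.sin_neg]
  ring

lemma two_cos_sub_two (z : ℂ) : 2 * Complex.cos (2 * z) - 2 = -4 * Complex.sin z ^ 2 := by
  rw [Complex.cos_two_mul]
  linear_combination (4 : ℂ) * Complex.sin_sq_add_cos_sq z

lemma fourier_auxT (ε : ℝ) (hε : 0 < ε) (x : ℝ) (hx : x ≠ 0) :
    𝓕 (auxT ε) x = auxS ε x := by
  have hπ := Real.pi_pos
  set c : ℂ := ((-2 * π * x : ℝ) : ℂ) * Complex.I with hc_def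
  have hcne : c ≠ 0 := by
    apply mul_ne_zero _ Complex.I_ne_zero
    rw [Complex.ofReal_ne_zero]
    rcases hx.lt_or_gt with h | h <;> nlinarith
  have hε' : (ε : ℂ) ≠ 0 := Complex.ofReal_ne_zero.2 (ne_of_gt hε)
  have hcont : Continuous (fun v : ℝ => auxT ε v * Complex.exp (c * v)) :=
    (auxT_cont ε).mul (by fun_prop)
  rw [fourier_eq]
  have h2 : ∀ v : ℝ, Complex.exp (((-2 * π * v * x : ℝ) : ℂ) * Complex.I) * auxT ε v
      = auxT ε v * Complex.exp (c * v) := by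
    intro v; rw [mul_comm]; congr 1; rw [hc_def]; push_cast; ring
  simp_rw [h2]
  have h1 : (∫ v : ℝ, auxT ε v * Complex.exp (c * v))
      = ∫ v in (-ε)..ε, auxT ε v * Complex.exp (c * v) := by
    rw [intervalIntegral.integral_eq_integral_of_support_subset
      ((Function.support_mul_subset_left _ _).trans (auxT_support ε))]
  rw [h1, ← intervalIntegral.integral_add_adjacent_intervals (a := -ε) (b := 0) (c := ε)
    (hcont.intervalIntegrable _ _) (hcont.intervalIntegrable _ _)]
  have e1 : (∫ v in (-ε)..(0:ℝ), auxT ε v * Complex.exp (c * v))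
      = (1 / (ε:ℂ)^2) * ∫ v in (-ε)..(0:ℝ), ((ε:ℂ) + v) * Complex.exp (c * v) := by
    rw [← intervalIntegral.integral_const_mul]
    apply intervalIntegral.integral_congr
    intro v hv
    rw [uIcc_of_le (by linarith)] at hv
    obtain ⟨hv1, hv2⟩ := hv
    simp only [auxT]
    rw [_root_.abs_of_nonpos hv2, max_eq_right (by linarith)]
    push_cast
    field_simp
    ring
  have e2 : (∫ v in (0:ℝ)..ε, auxT ε v * Complex.exp (c * v))
      = (1 / (ε:ℂ)^2) * ∫ v in (0:ℝ)..ε, ((ε:ℂ) - v) * Complex.exp (c * v) := by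
    rw [← intervalIntegral.integral_const_mul]
    apply intervalIntegral.integral_congr
    intro v hv
    rw [uIcc_of_le (by linarith)] at hv
    obtain ⟨hv1, hv2⟩ := hv
    simp only [auxT]
    rw [_root_.abs_of_nonneg hv1, max_eq_right (by linarith)]
    push_cast
    field_simp
  rw [e1, e2, aux_int_exp' ε c hcne, aux_int_exp ε c hcne]
  have key : Complex.exp (c * ε) + Complex.exp (-(c * ε)) - 2
      = -4 * Complex.sin ((π:ℂ) * ε * x) ^ 2 := by
    have hw : c * (ε:ℂ) = -(2 * ((π:ℂ) * ε * x)) * I := by rw [hc_def]; push_cast; ring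
    calc Complex.exp (c * ε) + Complex.exp (-(c * ε)) - 2
        = (Complex.exp ((2 * ((π:ℂ) * ε * x)) * I)
            + Complex.exp (-(2 * ((π:ℂ) * ε * x)) * I)) - 2 := by
          rw [hw]; rw [show -(-(2 * ((π:ℂ) * ε * x)) * I) = (2 * ((π:ℂ) * ε * x)) * I by ring]
          ring
      _ = 2 * Complex.cos (2 * ((π:ℂ) * ε * x)) - 2 := by rw [exp_add_exp_neg]
      _ = -4 * Complex.sin ((π:ℂ) * ε * x) ^ 2 := two_cos_sub_two _
  have hc2 : c ^ 2 = -(4 * (π:ℂ)^2 * (x:ℂ)^2) := by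
    rw [hc_def]; push_cast; rw [mul_pow, Complex.I_sq]; ring
  have hπ' : ((π:ℝ) : ℂ) ≠ 0 := Complex.ofReal_ne_zero.2 (ne_of_gt hπ)
  have hx' : (x : ℂ) ≠ 0 := Complex.ofReal_ne_zero.2 hx
  have main : ∀ C : ℂ, C ≠ 0 → C ^ 2 = -(4 * (π:ℂ)^2 * (x:ℂ)^2) →
      (1/(ε:ℂ)^2) * ((ε:ℂ)/C + (Complex.exp (-(C * ε)) - 1)/C^2)
        + (1/(ε:ℂ)^2) * ((Complex.exp (C * ε) - 1)/C^2 - (ε:ℂ)/C)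
      = (Complex.exp (C * ε) + Complex.exp (-(C * ε)) - 2)
          / (-(4 * (π:ℂ)^2 * (x:ℂ)^2) * (ε:ℂ)^2) := by
    intro C hC h2
    rw [← h2]
    ring
  rw [main c hcne hc2, key]
  unfold auxS
  push_cast
  rw [div_pow, div_eq_div_iff (by intro h; apply hx'; simpa [hπ', hε'] using h)
    (pow_ne_zero 2 (by simp [hπ', hε', hx']))]
  ring


lemma auxS_fourierInv (ε : ℝ) (hε : 0 < ε) (s : ℝ) :
    (∫ x : ℝ, Complex.exp (2 * π * Complex.I * s * x) * auxS ε x) = auxT ε s := by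
  have h0 : ∀ᵐ x : ℝ, x ≠ (0:ℝ) := by
    rw [ae_iff]
    simp only [ne_eq, not_not]
    rw [show {x : ℝ | x = 0} = {0} from Set.setOf_eq_eq_singleton]
    exact measure_singleton 0
  have hae : 𝓕 (auxT ε) =ᵐ[volume] auxS ε := by
    filter_upwards [h0] with x hx
    exact fourier_auxT ε hε x hx
  have hS : Integrable (𝓕 (auxT ε)) := (auxS_integrable ε hε).congr hae.symm
  have hinv := (auxT_cont ε).fourierInv_fourier_eq (auxT_integrable ε hε) hS
  calc (∫ x : ℝ, Complex.exp (2 * π * Complex.I * s * x) * auxS ε x)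
      = ∫ x : ℝ, Complex.exp (((2 * π * x * s : ℝ) : ℂ) * Complex.I) * 𝓕 (auxT ε) x := by
        apply MeasureTheory.integral_congr_ae
        filter_upwards [hae] with x hx
        rw [hx]
        congr 1
        push_cast
        ring
    _ = 𝓕⁻ (𝓕 (auxT ε)) s := (fourierInv_eq _ s).symm
    _ = auxT ε s := by rw [hinv]

lemma norm_exp_osc (r : ℝ) : ‖Complex.exp ((r : ℂ) * Complex.I)‖ = 1 := by
  rw [Complex.norm_exp]
  simp

lemma norm_exp_osc' (t x : ℝ) : ‖Complex.exp (2 * π * Complex.I * t * x)‖ = 1 := by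
  rw [show (2 * (π:ℂ) * Complex.I * t * x) = ((2 * π * t * x : ℝ) : ℂ) * Complex.I by
    push_cast; ring]
  exact norm_exp_osc _

lemma exp_arg_split (u x δ : ℝ) :
    -(2 * (π:ℂ) * Complex.I * (u:ℝ) * ((x:ℂ) + (δ:ℂ) * Complex.I))
      = ((2 * π * u * δ : ℝ) : ℂ) * (-1) * Complex.I ^ 2
        + -(2 * (π:ℂ) * Complex.I * (u:ℝ) * (x:ℂ)) := by
  push_cast; ring

lemma exp_split (u x δ : ℝ) :
    Complex.exp (-(2 * (π:ℂ) * Complex.I * (u:ℝ) * ((x:ℂ) + (δ:ℂ) * Complex.I)))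
      = ((Real.exp (2 * π * u * δ) : ℝ) : ℂ)
        * Complex.exp (-(2 * (π:ℂ) * Complex.I * (u:ℝ) * (x:ℂ))) := by
  rw [exp_arg_split, Complex.exp_add, Complex.I_sq]
  congr 1
  rw [show ((2 * π * u * δ : ℝ) : ℂ) * (-1) * (-1) = ((2 * π * u * δ : ℝ) : ℂ) by ring]
  exact (Complex.ofReal_exp _).symm ▸ rfl

lemma nrm_split (u x δ : ℝ) :
    ‖Complex.exp (-(2 * (π:ℂ) * Complex.I * (u:ℝ) * ((x:ℂ) + (δ:ℂ) * Complex.I)))‖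
      = Real.exp (2 * π * u * δ) := by
  rw [exp_split, norm_mul]
  rw [show -(2 * (π:ℂ) * Complex.I * (u:ℝ) * (x:ℂ)) = ((-(2 * π * u * x) : ℝ) : ℂ) * Complex.I by
    push_cast; ring]
  rw [norm_exp_osc, Complex.norm_real, Real.norm_eq_abs, abs_of_pos (Real.exp_pos _), mul_one]

lemma key_delta (U : Set ℝ) (hUc : U.Countable) (b : ℝ → ℂ) (p : ℂ → ℂ)
    (ε : ℝ) (hε : 0 < ε) (δ : ℝ) (hδ : 0 < δ) (t : ℝ)
    (hsum : Summable (fun u : U => ‖b u‖ * Real.exp (2 * π * u * δ)))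
    (hps : ∀ x : ℝ, p ((x:ℂ) + (δ:ℂ) * Complex.I)
      = ∑' u : U, b u * Complex.exp (-(2 * π * Complex.I * ((u:ℝ):ℂ)
          * ((x:ℂ) + (δ:ℂ) * Complex.I)))) :
    (∫ x : ℝ, Complex.exp (2 * π * Complex.I * t * x)
        * (p ((x:ℂ) + (δ:ℂ) * Complex.I) * auxS ε x))
      = ∑' u : U, (b u * (Real.exp (2 * π * u * δ) : ℝ)) * auxT ε (t - u) := by
  haveI : Countable ↥U := hUc.to_subtype
  set F : ↥U → ℝ → ℂ := fun u x => Complex.exp (2 * π * Complex.I * t * x)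
    * (b u * Complex.exp (-(2 * π * Complex.I * ((u:ℝ):ℂ) * ((x:ℂ) + (δ:ℂ) * Complex.I)))
        * auxS ε x) with hF
  have hFnorm : ∀ (u : ↥U) (x : ℝ), ‖F u x‖ = (‖b u‖ * Real.exp (2 * π * u * δ)) * ‖auxS ε x‖ := by
    intro u x
    rw [hF]
    simp only [norm_mul, norm_exp_osc', nrm_split, one_mul]
  have hFint : ∀ u : ↥U, Integrable (F u) := by
    intro u
    have : Integrable (fun x : ℝ => (Complex.exp (2 * π * Complex.I * t * x)
        * (b u * Complex.exp (-(2 * π * Complex.I * ((u:ℝ):ℂ) * ((x:ℂ) + (δ:ℂ) * Complex.I)))))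
        * auxS ε x) := by
      apply (auxS_integrable ε hε).bdd_mul (c := ‖b u.1‖ * Real.exp (2 * π * u * δ))
      · apply Continuous.aestronglyMeasurable
        fun_prop
      · refine ae_of_all _ fun x => ?_
        rw [norm_mul, norm_exp_osc', one_mul, norm_mul, nrm_split]
    apply this.congr
    filter_upwards with x
    rw [hF]
    ring
  have hFI : ∀ u : ↥U, (∫ x : ℝ, F u x)
      = (b u * (Real.exp (2 * π * u * δ) : ℝ)) * auxT ε (t - u) := by
    intro u
    have heq : ∀ x : ℝ, F u x = (b u * ((Real.exp (2 * π * u * δ) : ℝ) : ℂ))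
        * (Complex.exp (2 * π * Complex.I * ((t - u : ℝ) : ℂ) * x) * auxS ε x) := by
      intro x
      rw [hF]
      simp only []
      rw [exp_split]
      rw [show Complex.exp (2 * π * Complex.I * t * x)
          * (b u * (((Real.exp (2 * π * u * δ) : ℝ) : ℂ)
            * Complex.exp (-(2 * (π:ℂ) * Complex.I * ((u:ℝ):ℂ) * (x:ℂ)))) * auxS ε x)
          = (b u * ((Real.exp (2 * π * u * δ) : ℝ) : ℂ))
            * ((Complex.exp (2 * π * Complex.I * t * x)
              * Complex.exp (-(2 * (π:ℂ) * Complex.I * ((u:ℝ):ℂ) * (x:ℂ)))) * auxS ε x) by ring]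
      rw [← Complex.exp_add]
      congr 3
      push_cast
      ring
    calc (∫ x : ℝ, F u x)
        = ∫ x : ℝ, (b u * ((Real.exp (2 * π * u * δ) : ℝ) : ℂ))
            * (Complex.exp (2 * π * Complex.I * ((t - u : ℝ) : ℂ) * x) * auxS ε x) := by
          exact MeasureTheory.integral_congr_ae (Filter.Eventually.of_forall heq)
      _ = (b u * ((Real.exp (2 * π * u * δ) : ℝ) : ℂ))
            * ∫ x : ℝ, Complex.exp (2 * π * Complex.I * ((t - u : ℝ) : ℂ) * x) * auxS ε x := by
          exact MeasureTheory.integral_const_mul _ _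
      _ = (b u * ((Real.exp (2 * π * u * δ) : ℝ) : ℂ)) * auxT ε (t - u) := by
          rw [auxS_fourierInv ε hε (t - u)]
  have hintgnd : ∀ x : ℝ, Complex.exp (2 * π * Complex.I * t * x)
      * (p ((x:ℂ) + (δ:ℂ) * Complex.I) * auxS ε x) = ∑' u : U, F u x := by
    intro x
    rw [hps x, ← tsum_mul_right, ← tsum_mul_left]
  have hsum' : Summable fun u : ↥U => ∫ x : ℝ, ‖F u x‖ := by
    have : ∀ u : ↥U, (∫ x : ℝ, ‖F u x‖)
        = (‖b u‖ * Real.exp (2 * π * u * δ)) * ∫ x : ℝ, ‖auxS ε x‖ := by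
      intro u
      rw [← MeasureTheory.integral_const_mul]
      exact MeasureTheory.integral_congr_ae (Filter.Eventually.of_forall fun x => hFnorm u x)
    rw [funext this]
    exact hsum.mul_right _
  calc (∫ x : ℝ, Complex.exp (2 * π * Complex.I * t * x)
        * (p ((x:ℂ) + (δ:ℂ) * Complex.I) * auxS ε x))
      = ∫ x : ℝ, ∑' u : U, F u x :=
        MeasureTheory.integral_congr_ae (Filter.Eventually.of_forall hintgnd)
    _ = ∑' u : U, ∫ x : ℝ, F u x :=
        (MeasureTheory.integral_tsum_of_summable_integral_norm hFint hsum').symm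
    _ = ∑' u : U, (b u * (Real.exp (2 * π * u * δ) : ℝ)) * auxT ε (t - u) := by
        exact tsum_congr hFI

lemma U_ctble (U : Set ℝ) (hU0 : U ⊆ Iic 0) (hUfin : ∀ a b : ℝ, (U ∩ Icc a b).Finite) :
    U.Countable := by
  have h : U ⊆ ⋃ n : ℕ, (U ∩ Icc (-(n:ℝ)) 0) := by
    intro u hu
    rcases exists_nat_ge (-u) with ⟨n, hn⟩
    exact mem_iUnion.2 ⟨n, hu, by constructor <;> [linarith; exact hU0 hu]⟩
  exact Set.Countable.mono h (countable_iUnion fun n => (hUfin _ _).countable)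

lemma isolation (U : Set ℝ) (hUfin : ∀ a b : ℝ, (U ∩ Icc a b).Finite) (u : ℝ) :
    ∃ r > 0, ∀ v ∈ U, |v - u| < r → v = u := by
  set V : Set ℝ := (U ∩ Icc (u-1) (u+1)) \ {u} with hV
  have hVfin : V.Finite := (hUfin (u-1) (u+1)).diff
  have hu : u ∈ Vᶜ := by simp [hV]
  rcases Metric.isOpen_iff.1 hVfin.isClosed.isOpen_compl u hu with ⟨r, hr0, hball⟩
  refine ⟨min r 1, lt_min hr0 one_pos, fun v hv hdist => ?_⟩
  by_contra hne
  have h1 : |v - u| < 1 := lt_of_lt_of_le hdist (min_le_right _ _)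
  rw [abs_sub_lt_iff] at h1
  have hv1 : v ∈ V := ⟨⟨hv, by constructor <;> linarith⟩, hne⟩
  exact hball (by rw [Metric.mem_ball, Real.dist_eq]
                  exact lt_of_lt_of_le hdist (min_le_left _ _)) hv1

lemma im_aux (x r : ℝ) : ((x:ℂ) + (r:ℂ) * Complex.I).im = r := by simp

lemma auxT_zero_val (ε : ℝ) (hε : 0 < ε) : auxT ε 0 = ((ε⁻¹ : ℝ) : ℂ) := by
  unfold auxT
  rw [abs_zero, sub_zero, max_eq_right hε.le]
  congr 1
  field_simp


/-- if an entire function `p` of exponential type `σ`, bounded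
on the upper half-plane, has an absolutely convergent Dirichlet expansion
`p(w) = ∑_{u∈U} b_u e^{-2πiuw}` `(Im w > 0)` over a locally finite
`U ⊆ (-∞,0]`, and the inverse Fourier transform of
`p_ε(w)=p(w)(sin(πεw)/(πεw))²` vanishes outside `(-σ-ε, ε)` for all small
`ε > 0`, then `b_u = 0` for `u < -σ` and `p` is an exponential polynomial with
finitely many nonnegative real frequencies. -/
theorem stmt16 (U : Set ℝ) (hU0 : U ⊆ Set.Iic 0)
    (hUfin : ∀ a b : ℝ, (U ∩ Set.Icc a b).Finite)
    (b : ℝ → ℂ) (p : ℂ → ℂ) (hp : Differentiable ℂ p)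
    (σ : ℝ) (hσ : 0 < σ)
    (htype : ∃ A > (0:ℝ), ∀ w : ℂ, ‖p w‖ ≤ A * Real.exp (σ * ‖w‖))
    (hbdd : ∃ M : ℝ, ∀ w : ℂ, 0 ≤ w.im → ‖p w‖ ≤ M)
    (hrep : ∀ w : ℂ, 0 < w.im →
      Summable (fun u : U =>
        ‖b u * Complex.exp (-(2 * π * Complex.I * (u : ℝ) * w))‖) ∧
      p w = ∑' u : U, b u * Complex.exp (-(2 * π * Complex.I * (u : ℝ) * w)))
    (hvanish : ∃ ε₀ > (0:ℝ), ∀ ε : ℝ, 0 < ε → ε < ε₀ →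
      ∀ t : ℝ, t ∉ Set.Ioo (-σ - ε) ε →
        (∫ x : ℝ, Complex.exp (2 * π * Complex.I * t * x) *
          (p x * (Complex.sin (π * ε * x) / (π * ε * x)) ^ 2)) = 0) :
    (∀ u ∈ U, u < -σ → b u = 0) ∧
    ∃ n : ℕ, ∃ b' : Fin n → ℂ, ∃ γ : Fin n → ℝ,
      (∀ k, 0 ≤ γ k) ∧
      ∀ w : ℂ, p w = ∑ k, b' k * Complex.exp (Complex.I * γ k * w) := by
  obtain ⟨ε₀, hε₀, hvan⟩ := hvanish
  obtain ⟨M, hM⟩ := hbdd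
  have hUc : U.Countable := U_ctble U hU0 hUfin
  haveI : Countable ↥U := hUc.to_subtype
  -- summability in the convenient form
  have hsummable : ∀ δ : ℝ, 0 < δ →
      Summable (fun u : U => ‖b u‖ * Real.exp (2 * π * u * δ)) := by
    intro δ hδ
    have him : (((0:ℝ):ℂ) + (δ:ℂ) * Complex.I).im = δ := by simp
    have h0 := (hrep (((0:ℝ):ℂ) + (δ:ℂ) * Complex.I) (by rw [him]; exact hδ)).1
    apply h0.congr
    intro u
    rw [norm_mul, nrm_split]
  -- Part 1
  have part1 : ∀ u ∈ U, u < -σ → b u = 0 := by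
    intro u₀ hu₀ hu₀σ
    obtain ⟨r, hr0, hiso⟩ := isolation U hUfin u₀
    set ε := min (min (ε₀/2) r) (-σ - u₀) with hεdef
    have hε : 0 < ε := lt_min (lt_min (by linarith) hr0) (by linarith)
    have hε1 : ε < ε₀ := lt_of_le_of_lt ((min_le_left _ _).trans (min_le_left _ _)) (by linarith)
    have hεr : ε ≤ r := (min_le_left _ _).trans (min_le_right _ _)
    have hεσ : ε ≤ -σ - u₀ := min_le_right _ _
    have hkey : ∀ δ : ℝ, 0 < δ →
        (∫ x : ℝ, Complex.exp (2 * π * Complex.I * u₀ * x)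
            * (p ((x:ℂ) + (δ:ℂ) * Complex.I) * auxS ε x))
          = (b u₀ * (Real.exp (2 * π * u₀ * δ) : ℝ)) * auxT ε 0 := by
      intro δ hδ
      have hps : ∀ x : ℝ, p ((x:ℂ) + (δ:ℂ) * Complex.I)
          = ∑' u : U, b u * Complex.exp (-(2 * π * Complex.I * ((u:ℝ):ℂ)
              * ((x:ℂ) + (δ:ℂ) * Complex.I))) := by
        intro x
        exact (hrep ((x:ℂ) + (δ:ℂ) * Complex.I) (by simp [hδ])).2
      rw [key_delta U hUc b p ε hε δ hδ u₀ (hsummable δ hδ) hps]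
      have hcollapse := tsum_eq_single (L := SummationFilter.unconditional _) (f := fun u : U =>
          (b u * (Real.exp (2 * π * u * δ) : ℝ)) * auxT ε (u₀ - u))
        (⟨u₀, hu₀⟩ : ↥U) (fun u hu => ?_)
      · rw [hcollapse]; simp only [sub_self]
      · have hne : (u : ℝ) ≠ u₀ := fun h => hu (Subtype.ext h)
        have hT : auxT ε (u₀ - u) = 0 := by
          apply auxT_eq_zero
          by_contra h
          push_neg at h
          apply hne
          apply hiso u u.2
          calc |(u:ℝ) - u₀| = |u₀ - (u:ℝ)| := abs_sub_comm _ _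
            _ < ε := h
            _ ≤ r := hεr
        simp only [hT, mul_zero]
    -- limits
    have hδn : ∀ n : ℕ, (0:ℝ) < ((n:ℝ)+1)⁻¹ := fun n => by positivity
    have hδlim : Filter.Tendsto (fun n : ℕ => ((n:ℝ)+1)⁻¹) Filter.atTop (nhds 0) :=
      tendsto_one_div_add_atTop_nhds_zero_nat.congr (by intro n; rw [one_div])
    set L : ℕ → ℂ := fun n => ∫ x : ℝ, Complex.exp (2 * π * Complex.I * u₀ * x)
      * (p ((x:ℂ) + ((((n:ℝ)+1)⁻¹ : ℝ):ℂ) * Complex.I) * auxS ε x) with hL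
    have hM0 : 0 ≤ M := le_trans (norm_nonneg _) (hM Complex.I (by simp))
    have hlim1 : Filter.Tendsto L Filter.atTop
        (nhds (∫ x : ℝ, Complex.exp (2 * π * Complex.I * u₀ * x) * (p x * auxS ε x))) := by
      apply MeasureTheory.tendsto_integral_of_dominated_convergence
        (bound := fun x : ℝ => M * ‖auxS ε x‖)
      · intro n
        apply Measurable.aestronglyMeasurable
        apply Measurable.mul
        · fun_prop
        · exact ((hp.continuous.measurable.comp (by fun_prop)).mul (auxS_meas ε))
      · exact ((auxS_integrable ε hε).norm.const_mul M)
      · intro n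
        filter_upwards with x
        rw [show Complex.exp (2 * (π:ℂ) * Complex.I * u₀ * x)
            = Complex.exp (((2 * π * u₀ * x : ℝ):ℂ) * Complex.I) by push_cast; ring_nf]
        rw [norm_mul, norm_mul]
        rw [show ‖Complex.exp (((2 * π * u₀ * x : ℝ):ℂ) * Complex.I)‖ = 1 by
          rw [Complex.norm_exp]; simp]
        rw [one_mul]
        gcongr
        exact hM _ (by rw [im_aux]; exact (hδn n).le)
      · filter_upwards with x
        have hz : Filter.Tendsto (fun n : ℕ => (x:ℂ) + ((((n:ℝ)+1)⁻¹ : ℝ):ℂ) * Complex.I)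
            Filter.atTop (nhds ((x:ℂ))) := by
          have h2 := ((Complex.continuous_ofReal.tendsto 0).comp hδlim).mul_const Complex.I
          have h3 := (tendsto_const_nhds (x := ((x:ℂ))) (f := Filter.atTop)).add h2
          simpa using h3
        exact Filter.Tendsto.const_mul _ (((hp.continuous.tendsto _).comp hz).mul_const _)
    have hzero : (∫ x : ℝ, Complex.exp (2 * π * Complex.I * u₀ * x) * (p x * auxS ε x)) = 0 := by
      have hnm : u₀ ∉ Set.Ioo (-σ - ε) ε := by
        simp only [mem_Ioo, not_and_or, not_lt]
        left; linarith
      have := hvan ε hε hε1 u₀ hnm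
      unfold auxS
      exact this
    rw [hzero] at hlim1
    have hLeq : ∀ n : ℕ, L n = (b u₀ * (Real.exp (2 * π * u₀ * ((n:ℝ)+1)⁻¹) : ℝ)) * auxT ε 0 :=
      fun n => hkey _ (hδn n)
    have hlim2 : Filter.Tendsto L Filter.atTop (nhds ((b u₀) * auxT ε 0)) := by
      rw [funext hLeq]
      have h1 : Filter.Tendsto (fun n : ℕ => Real.exp (2 * π * u₀ * ((n:ℝ)+1)⁻¹))
          Filter.atTop (nhds 1) := by
        have h0 : Filter.Tendsto (fun n : ℕ => 2 * π * u₀ * ((n:ℝ)+1)⁻¹)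
            Filter.atTop (nhds 0) := by
          simpa using hδlim.const_mul (2 * π * u₀)
        have := (Real.continuous_exp.tendsto 0).comp h0
        simpa [Function.comp_def] using this
      have h2 := ((Complex.continuous_ofReal.tendsto 1).comp h1).const_mul (b u₀)
      have h3 := h2.mul_const (auxT ε 0)
      simpa using h3
    have hfin : (b u₀) * auxT ε 0 = 0 := tendsto_nhds_unique hlim2 hlim1
    rw [auxT_zero_val ε hε] at hfin
    rcases mul_eq_zero.1 hfin with h | h
    · exact h
    · exfalso
      rw [Complex.ofReal_eq_zero] at h
      exact (inv_ne_zero (ne_of_gt hε)) h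
  refine ⟨part1, ?_⟩
  -- Part 2
  have hA : {u : ↥U | (u:ℝ) ∈ Icc (-σ) 0}.Finite := by
    have h1 : ((Subtype.val : ↥U → ℝ) ⁻¹' (U ∩ Icc (-σ) 0)).Finite :=
      Set.Finite.preimage Subtype.val_injective.injOn (hUfin (-σ) 0)
    exact h1.subset fun u hu => ⟨u.2, hu⟩
  classical
  set s : Finset ↥U := hA.toFinset with hs
  set e := s.equivFin with he
  refine ⟨s.card, fun k => b ((e.symm k : ↥U) : ℝ),
    fun k => -(2 * π * ((e.symm k : ↥U) : ℝ)), fun k => ?_, ?_⟩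
  · show (0:ℝ) ≤ -(2 * π * ((e.symm k : ↥U) : ℝ))
    have hle : (((e.symm k : ↥U)) : ℝ) ≤ 0 := hU0 (e.symm k).1.2
    have := Real.pi_pos
    nlinarith
  · set q : ℂ → ℂ := fun w => ∑ k, b ((e.symm k : ↥U) : ℝ)
      * Complex.exp (Complex.I * (-(2 * π * ((e.symm k : ↥U) : ℝ)) : ℝ) * w) with hqdef
    have hq : ∀ w : ℂ, 0 < w.im → p w = q w := by
      intro w hw
      rw [(hrep w hw).2]
      have h1 : (∑' u : ↥U, b u * Complex.exp (-(2 * π * Complex.I * ((u:ℝ):ℂ) * w)))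
          = ∑ u ∈ s, b u * Complex.exp (-(2 * π * Complex.I * ((u:ℝ):ℂ) * w)) := by
        apply tsum_eq_sum
        intro u hu
        have h2 : ¬((u:ℝ) ∈ Icc (-σ) 0) := by
          intro hmem
          exact hu (by rw [hs, Set.Finite.mem_toFinset]; exact hmem)
        have h3 : (u:ℝ) ≤ 0 := hU0 u.2
        have h4 : (u:ℝ) < -σ := by
          simp only [mem_Icc, not_and_or, not_le] at h2
          rcases h2 with h | h
          · linarith
          · linarith
        rw [part1 u u.2 h4, zero_mul]
      rw [h1, hqdef]
      rw [← Finset.sum_coe_sort s (fun u => b u * Complex.exp (-(2 * π * Complex.I * ((u:ℝ):ℂ) * w)))]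
      rw [← Equiv.sum_comp e.symm
        (fun a : {x // x ∈ s} => b (a:ℝ) * Complex.exp (-(2 * π * Complex.I * (((a : ↥U)):ℝ) * w)))]
      apply Finset.sum_congr rfl
      intro k _
      congr 1
      congr 1
      push_cast
      ring
    have hpa : AnalyticOnNhd ℂ p univ := Complex.analyticOnNhd_univ_iff_differentiable.2 hp
    have hqd : Differentiable ℂ q := by
      apply Differentiable.fun_sum
      intro k _
      apply Differentiable.const_mul
      fun_prop
    have hqa : AnalyticOnNhd ℂ q univ := Complex.analyticOnNhd_univ_iff_differentiable.2 hqd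
    have heq : EqOn p q univ := by
      apply hpa.eqOn_of_preconnected_of_eventuallyEq hqa isPreconnected_univ (mem_univ Complex.I)
      have hopen : IsOpen {w : ℂ | 0 < w.im} := isOpen_lt continuous_const Complex.continuous_im
      exact Filter.eventually_of_mem (hopen.mem_nhds (by simp)) (fun w hw => hq w hw)
    exact fun w => heq (mem_univ w)
end
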